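/- arXiv:2211.17230 — 10 statements merged into one kernel-verified Lean document; each statement's English description precedes it below -/
import Mathlib

section
/- For the standard normal pdf φ(x) = (1/√(2π))·exp(−x²/2), a < b real numbers, σ > 0, c > 0, and s ∈ [a,b], the ratio R(s) = (∫_a^b exp(−(x−s−c)²/(2σ²)) dx) / (∫_a^b exp(−(x−s)²/(2σ²)) dx) is strictly decreasing in s on [a,b]. -/
open Real MeasureTheory intervalIntegral

noncomputable def gau (σ u : ℝ) : ℝ := Real.exp (-u^2 / (2*σ^2))

lemma gau_pos (σ u : ℝ) : 0 < gau σ u := Real.exp_pos _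

lemma gau_cont (σ : ℝ) : Continuous (gau σ) := by
  unfold gau; fun_prop

lemma gau_intble (σ p q : ℝ) : IntervalIntegrable (gau σ) volume p q :=
  (gau_cont σ).intervalIntegrable _ _

lemma gau_hasDerivAt (σ : ℝ) (hσ : 0 < σ) (u : ℝ) :
    HasDerivAt (gau σ) (-u / σ^2 * gau σ u) u := by
  have h1 : HasDerivAt (fun u : ℝ => -u^2 / (2*σ^2)) (-u/σ^2) u := by
    have h : HasDerivAt (fun u : ℝ => u^2) (2*u) u := by
      simpa using (hasDerivAt_pow 2 u)
    have h2 := (h.fun_neg).div_const (2*σ^2)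
    refine h2.congr_deriv ?_
    field_simp
  have h2 := h1.exp
  show HasDerivAt (fun v => Real.exp (-v^2 / (2*σ^2))) _ u
  convert h2 using 1
  rw [gau]
  ring

lemma integral_id_mul_gau (σ : ℝ) (hσ : 0 < σ) (p q : ℝ) :
    ∫ t in p..q, t * gau σ t = σ^2 * (gau σ p - gau σ q) := by
  have h : ∀ t ∈ Set.uIcc p q, HasDerivAt (fun t => -σ^2 * gau σ t) (t * gau σ t) t := by
    intro t _
    have h2 := (gau_hasDerivAt σ hσ t).const_mul (-σ^2)
    refine h2.congr_deriv ?_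
    field_simp
  rw [intervalIntegral.integral_eq_sub_of_hasDerivAt h
    ((continuous_id.mul (gau_cont σ)).intervalIntegrable _ _)]
  ring

lemma integral_sq_mul_gau (σ : ℝ) (hσ : 0 < σ) (p q : ℝ) :
    ∫ t in p..q, t^2 * gau σ t
      = σ^2 * (∫ t in p..q, gau σ t) + σ^2 * (p * gau σ p - q * gau σ q) := by
  have h : ∀ t ∈ Set.uIcc p q,
      HasDerivAt (fun t => t * gau σ t) (gau σ t - t^2/σ^2 * gau σ t) t := by
    intro t _
    have h2 := (hasDerivAt_id' t).fun_mul (gau_hasDerivAt σ hσ t)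
    refine h2.congr_deriv ?_
    field_simp
    ring
  have key := intervalIntegral.integral_eq_sub_of_hasDerivAt h
    (((gau_cont σ).sub (((continuous_pow 2).div_const _).mul (gau_cont σ))).intervalIntegrable _ _)
  have hsplit : ∫ t in p..q, (gau σ t - t^2/σ^2 * gau σ t)
      = (∫ t in p..q, gau σ t) - (1/σ^2) * ∫ t in p..q, t^2 * gau σ t := by
    rw [intervalIntegral.integral_sub (gau_intble σ p q)
      ((((continuous_pow 2).div_const _).fun_mul (gau_cont σ)).intervalIntegrable _ _),
      ← intervalIntegral.integral_const_mul]
    congr 1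
    apply intervalIntegral.integral_congr
    intro t _
    field_simp
  rw [hsplit] at key
  have hσ2 : σ^2 ≠ 0 := by positivity
  field_simp at key ⊢
  nlinarith [key]

lemma key_ineq (σ : ℝ) (hσ : 0 < σ) (α β : ℝ) (h : α < β) :
    (α * gau σ α - β * gau σ β) * (∫ t in α..β, gau σ t)
      < σ^2 * (gau σ α - gau σ β)^2 := by
  set W := ∫ t in α..β, gau σ t with hWdef
  have hW : 0 < W :=
    intervalIntegral.intervalIntegral_pos_of_pos (gau_intble σ α β) (fun x => gau_pos σ x) h
  obtain ⟨m, hm⟩ : ∃ m, m * W = σ^2 * (gau σ α - gau σ β) :=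
    ⟨σ^2 * (gau σ α - gau σ β) / W, div_mul_cancel₀ _ hW.ne'⟩
  have cont1 : Continuous (fun t : ℝ => t * gau σ t) := continuous_id.mul (gau_cont σ)
  have hcontv : Continuous (fun t : ℝ => (t - m) * gau σ t) :=
    (continuous_id.sub continuous_const).mul (gau_cont σ)
  set F₀ : ℝ → ℝ := fun x => ∫ t in α..x, gau σ t with hF₀def
  set Φ : ℝ → ℝ := fun x => ∫ t in α..x, (t - m) * gau σ t with hΦdef
  have hΦeq : ∀ x, Φ x = σ^2 * (gau σ α - gau σ x) - m * F₀ x := by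
    intro x
    have h1 : Φ x = (∫ t in α..x, t * gau σ t) - ∫ t in α..x, m * gau σ t := by
      rw [hΦdef, ← intervalIntegral.integral_sub (cont1.intervalIntegrable _ _)
        ((continuous_const.fun_mul (gau_cont σ)).intervalIntegrable _ _)]
      apply intervalIntegral.integral_congr
      intro t _
      ring
    rw [h1, integral_id_mul_gau σ hσ, intervalIntegral.integral_const_mul]
  have hΦα : Φ α = 0 := intervalIntegral.integral_same
  have hΦβ : Φ β = 0 := by
    rw [hΦeq β]
    simp only [hF₀def]
    rw [← hWdef, ← hm]
    ring
  have hΦderiv : ∀ x, HasDerivAt Φ ((x - m) * gau σ x) x := by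
    intro x
    exact (hcontv.integral_hasStrictDerivAt α x).hasDerivAt
  have hF₀deriv : ∀ x, HasDerivAt F₀ (gau σ x) x := by
    intro x
    exact ((gau_cont σ).integral_hasStrictDerivAt α x).hasDerivAt
  have hF₀cont : Continuous F₀ := by
    rw [continuous_iff_continuousAt]
    exact fun x => (hF₀deriv x).continuousAt
  have hΦcont : Continuous Φ := by
    rw [continuous_iff_continuousAt]
    exact fun x => (hΦderiv x).continuousAt
  -- integration by parts
  have hparts : ∫ x in α..β, (x - m) * ((x - m) * gau σ x)
      = (β - m) * Φ β - (α - m) * Φ α - ∫ x in α..β, 1 * Φ x := by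
    apply intervalIntegral.integral_mul_deriv_eq_deriv_mul
      (u := fun x => x - m) (v := Φ)
    · intro x _
      simpa using (hasDerivAt_id x).sub_const m
    · intro x _
      exact hΦderiv x
    · exact (continuous_const.intervalIntegrable _ _)
    · exact (hcontv.intervalIntegrable _ _)
  rw [hΦα, hΦβ] at hparts
  -- rewrite the integral of Φ
  have hneg : ∫ x in α..β, 1 * Φ x
      = σ^2 * (gau σ α) * (β - α) - σ^2 * W - m * ∫ x in α..β, F₀ x := by
    have h2 : ∀ x, 1 * Φ x = (σ^2 * gau σ α - σ^2 * gau σ x) - m * F₀ x := by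
      intro x
      rw [hΦeq x]; ring
    rw [intervalIntegral.integral_congr
      (g := fun x => (σ^2 * gau σ α - σ^2 * gau σ x) - m * F₀ x) (fun x _ => h2 x)]
    rw [intervalIntegral.integral_sub ((continuous_const.fun_sub
        (continuous_const.fun_mul (gau_cont σ))).intervalIntegrable _ _)
      ((continuous_const.fun_mul hF₀cont).intervalIntegrable _ _),
      intervalIntegral.integral_sub (continuous_const.intervalIntegrable _ _)
        ((continuous_const.fun_mul (gau_cont σ)).intervalIntegrable _ _),
      intervalIntegral.integral_const, intervalIntegral.integral_const_mul,
      intervalIntegral.integral_const_mul, ← hWdef, smul_eq_mul]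
    ring
  -- lower bound for the deficit term
  have hε : 0 < σ^2 * min (gau σ α) (gau σ β) := by
    have := gau_pos σ α
    have := gau_pos σ β
    have : 0 < min (gau σ α) (gau σ β) := lt_min (gau_pos σ α) (gau_pos σ β)
    positivity
  have hψlb : ∀ x ∈ Set.Icc α β,
      σ^2 * min (gau σ α) (gau σ β) ≤ σ^2 * gau σ α - m * F₀ x := by
    intro x hx
    have hF₀nn : 0 ≤ F₀ x :=
      intervalIntegral.integral_nonneg hx.1 (fun t _ => (gau_pos σ t).le)
    have hF₀le : F₀ x ≤ W := by
      have hsub : W - F₀ x = ∫ t in x..β, gau σ t :=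
        intervalIntegral.integral_interval_sub_left (gau_intble σ α β) (gau_intble σ α x)
      have : 0 ≤ ∫ t in x..β, gau σ t :=
        intervalIntegral.integral_nonneg hx.2 (fun t _ => (gau_pos σ t).le)
      rw [← hsub] at this
      linarith
    have hmin1 : min (gau σ α) (gau σ β) ≤ gau σ α := min_le_left _ _
    have hmin2 : min (gau σ α) (gau σ β) ≤ gau σ β := min_le_right _ _
    have hσ2 : (0:ℝ) < σ^2 := by positivity
    rcases le_total m 0 with hm0 | hm0
    · nlinarith
    · nlinarith [mul_le_mul_of_nonneg_left hF₀le hm0]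
  have hψint : ∫ x in α..β, (σ^2 * gau σ α - m * F₀ x)
      = σ^2 * gau σ α * (β - α) - m * ∫ x in α..β, F₀ x := by
    rw [intervalIntegral.integral_sub (continuous_const.intervalIntegrable _ _)
      ((continuous_const.fun_mul hF₀cont).intervalIntegrable _ _),
      intervalIntegral.integral_const, intervalIntegral.integral_const_mul, smul_eq_mul]
    ring
  have hψge : σ^2 * min (gau σ α) (gau σ β) * (β - α)
      ≤ σ^2 * gau σ α * (β - α) - m * ∫ x in α..β, F₀ x := by
    rw [← hψint]
    have := intervalIntegral.integral_mono_on (μ := volume)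
      (f := fun _ : ℝ => σ^2 * min (gau σ α) (gau σ β))
      (g := fun x => σ^2 * gau σ α - m * F₀ x) h.le
      (continuous_const.intervalIntegrable _ _)
      ((continuous_const.sub (continuous_const.mul hF₀cont)).intervalIntegrable _ _) hψlb
    rw [intervalIntegral.integral_const, smul_eq_mul] at this
    linarith
  -- expand E
  have hE : ∫ x in α..β, (x - m) * ((x - m) * gau σ x)
      = (∫ x in α..β, x^2 * gau σ x) - 2*m*(∫ x in α..β, x * gau σ x) + m^2*W := by
    have h3 : ∀ x : ℝ, (x - m) * ((x - m) * gau σ x)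
        = (x^2 * gau σ x - 2*m*(x * gau σ x)) + m^2 * gau σ x := by
      intro x; ring
    rw [intervalIntegral.integral_congr
      (g := fun x => (x^2 * gau σ x - 2*m*(x * gau σ x)) + m^2 * gau σ x) (fun x _ => h3 x)]
    have cont2 : Continuous (fun t : ℝ => t^2 * gau σ t) := (continuous_pow 2).mul (gau_cont σ)
    rw [intervalIntegral.integral_add
        ((cont2.fun_sub (continuous_const.fun_mul cont1)).intervalIntegrable _ _)
        ((continuous_const.fun_mul (gau_cont σ)).intervalIntegrable _ _),
      intervalIntegral.integral_sub (cont2.intervalIntegrable _ _)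
        ((continuous_const.fun_mul cont1).intervalIntegrable _ _),
      intervalIntegral.integral_const_mul, intervalIntegral.integral_const_mul, ← hWdef]
  rw [hE, integral_sq_mul_gau σ hσ, integral_id_mul_gau σ hσ, ← hWdef, ← hm] at hparts
  rw [hneg] at hparts
  -- conclude
  have hσ2 : (0:ℝ) < σ^2 := by positivity
  have hEbound : σ^2 * (α * gau σ α - β * gau σ β) < m^2 * W := by
    nlinarith [hψge, mul_pos hε (sub_pos.mpr h)]
  have h6 : m^2 * W * W = (σ^2 * (gau σ α - gau σ β))^2 := by rw [← hm]; ring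
  have h5 : σ^2 * ((α * gau σ α - β * gau σ β) * W) < σ^2 * (σ^2 * (gau σ α - gau σ β)^2) := by
    nlinarith [mul_lt_mul_of_pos_right hEbound hW, h6]
  exact lt_of_mul_lt_mul_left h5 hσ2.le

theorem ratio_strict_anti (a b c σ : ℝ) (hab : a < b) (hc : 0 < c) (hσ : 0 < σ)
    (R : ℝ → ℝ)
    (hR : ∀ s, R s = (∫ x in a..b, Real.exp (-(x - s - c)^2 / (2 * σ^2))) /
        (∫ x in a..b, Real.exp (-(x - s)^2 / (2 * σ^2)))) :
    ∀ s₁ s₂, a ≤ s₁ → s₁ < s₂ → s₂ ≤ b → R s₁ > R s₂ := by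
  set F : ℝ → ℝ := fun t => ∫ u in (a - t)..(b - t), gau σ u with hFdef
  have hFeq : ∀ t : ℝ, (∫ x in a..b, Real.exp (-(x - t)^2 / (2 * σ^2))) = F t := by
    intro t
    rw [hFdef]
    exact intervalIntegral.integral_comp_sub_right (fun u => Real.exp (-u^2 / (2*σ^2))) t
  have hFpos : ∀ t : ℝ, 0 < F t := by
    intro t
    exact intervalIntegral.intervalIntegral_pos_of_pos (gau_intble σ _ _)
      (fun x => gau_pos σ x) (sub_lt_sub_right hab t)
  set Ig : ℝ → ℝ := fun x => ∫ u in (0:ℝ)..x, gau σ u with hIgdef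
  have hIg : ∀ x, HasDerivAt Ig (gau σ x) x := by
    intro x
    exact ((gau_cont σ).integral_hasStrictDerivAt 0 x).hasDerivAt
  have hFalt : F = fun t => Ig (b - t) - Ig (a - t) := by
    funext t
    rw [hFdef, hIgdef]
    exact (intervalIntegral.integral_interval_sub_left (gau_intble σ 0 (b-t))
      (gau_intble σ 0 (a-t))).symm
  have hFderiv : ∀ t, HasDerivAt F (gau σ (a - t) - gau σ (b - t)) t := by
    intro t
    have h1 : HasDerivAt (fun t : ℝ => Ig (b - t)) (-gau σ (b - t)) t := by
      have hin : HasDerivAt (fun t : ℝ => b - t) (-1) t := by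
        simpa using (hasDerivAt_const t b).fun_sub (hasDerivAt_id t)
      have := (hIg (b - t)).comp t hin
      refine this.congr_deriv ?_
      simp
    have h2 : HasDerivAt (fun t : ℝ => Ig (a - t)) (-gau σ (a - t)) t := by
      have hin : HasDerivAt (fun t : ℝ => a - t) (-1) t := by
        simpa using (hasDerivAt_const t a).fun_sub (hasDerivAt_id t)
      have := (hIg (a - t)).comp t hin
      refine this.congr_deriv ?_
      simp
    rw [hFalt]
    have h3 := h1.fun_sub h2
    refine h3.congr_deriv ?_
    ring
  have hnumderiv : ∀ t, HasDerivAt (fun t => gau σ (a - t) - gau σ (b - t))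
      (((a-t) * gau σ (a-t) - (b-t) * gau σ (b-t))/σ^2) t := by
    intro t
    have h1 : HasDerivAt (fun t : ℝ => gau σ (a - t)) ((a-t)/σ^2 * gau σ (a-t)) t := by
      have hin : HasDerivAt (fun t : ℝ => a - t) (-1) t := by
        simpa using (hasDerivAt_const t a).fun_sub (hasDerivAt_id t)
      have := (gau_hasDerivAt σ hσ (a - t)).comp t hin
      refine this.congr_deriv ?_
      ring
    have h2 : HasDerivAt (fun t : ℝ => gau σ (b - t)) ((b-t)/σ^2 * gau σ (b-t)) t := by
      have hin : HasDerivAt (fun t : ℝ => b - t) (-1) t := by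
        simpa using (hasDerivAt_const t b).fun_sub (hasDerivAt_id t)
      have := (gau_hasDerivAt σ hσ (b - t)).comp t hin
      refine this.congr_deriv ?_
      ring
    have h3 := h1.fun_sub h2
    refine h3.congr_deriv ?_
    field_simp
  have hρanti : StrictAnti (fun t => (gau σ (a - t) - gau σ (b - t)) / F t) := by
    apply strictAnti_of_hasDerivAt_neg
      (f' := fun t => (((a-t) * gau σ (a-t) - (b-t) * gau σ (b-t))/σ^2 * F t -
        (gau σ (a - t) - gau σ (b - t)) * (gau σ (a - t) - gau σ (b - t))) / F t ^ 2)
    · intro t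
      exact (hnumderiv t).div (hFderiv t) (hFpos t).ne'
    · intro t
      apply div_neg_of_neg_of_pos _ (pow_pos (hFpos t) 2)
      rw [sub_neg]
      have hkey : ((a-t) * gau σ (a-t) - (b-t) * gau σ (b-t)) * F t
          < σ^2 * (gau σ (a - t) - gau σ (b - t))^2 :=
        key_ineq σ hσ (a - t) (b - t) (sub_lt_sub_right hab t)
      have hσ2 : (0:ℝ) < σ^2 := by positivity
      rw [div_mul_eq_mul_div, div_lt_iff₀ hσ2]
      calc ((a-t) * gau σ (a-t) - (b-t) * gau σ (b-t)) * F t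
          < σ^2 * (gau σ (a - t) - gau σ (b - t))^2 := hkey
        _ = (gau σ (a - t) - gau σ (b - t)) * (gau σ (a - t) - gau σ (b - t)) * σ^2 := by ring
  have hL : ∀ t, HasDerivAt (fun t => Real.log (F t))
      ((gau σ (a - t) - gau σ (b - t)) / F t) t := by
    intro t
    exact (hFderiv t).log (hFpos t).ne'
  have hDanti : StrictAnti (fun s => Real.log (F (s + c)) - Real.log (F s)) := by
    apply strictAnti_of_hasDerivAt_neg
      (f' := fun s => (gau σ (a - (s + c)) - gau σ (b - (s + c))) / F (s + c) -
        (gau σ (a - s) - gau σ (b - s)) / F s)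
    · intro s
      have h1 : HasDerivAt (fun s : ℝ => Real.log (F (s + c)))
          ((gau σ (a - (s + c)) - gau σ (b - (s + c))) / F (s + c)) s := by
        have := (hL (s + c)).comp s ((hasDerivAt_id s).add_const c)
        simpa [Function.comp_def] using this
      exact h1.sub (hL s)
    · intro s
      have := hρanti (lt_add_of_pos_right s hc)
      simpa [sub_neg] using this
  intro s₁ s₂ _ h12 _
  have hnum : ∀ s : ℝ, (∫ x in a..b, Real.exp (-(x - s - c)^2 / (2 * σ^2))) = F (s + c) := by
    intro s
    rw [← hFeq (s + c)]
    simp only [sub_sub]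
  have hRe : ∀ s : ℝ, R s = Real.exp (Real.log (F (s + c)) - Real.log (F s)) := by
    intro s
    rw [hR s, hnum s, hFeq s, Real.exp_sub, Real.exp_log (hFpos (s+c)), Real.exp_log (hFpos s)]
  rw [gt_iff_lt, hRe s₁, hRe s₂]
  exact Real.exp_lt_exp.mpr (hDanti h12)
end

section
/- For a < b, σ > 0, and s ∈ [a,b], and c ranging over (0, ΔQ] with ΔQ ≤ b − a, the function c ↦ (∫_a^b exp(−(x−a−c)²/(2σ²)) dx) / (∫_a^b exp(−(x−a)²/(2σ²)) dx) attains its maximum over [0, ΔQ] at c = ΔQ if ΔQ ≤ (b−a)/2, and at c = (b−a)/2 otherwise. -/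
open Real

theorem max_ratio_at_cstar (a b σ ΔQ : ℝ) (hab : a < b) (hσ : 0 < σ)
    (hΔ : 0 < ΔQ) (hΔb : ΔQ ≤ b - a)
    (R : ℝ → ℝ)
    (hR : ∀ c, R c = (∫ x in a..b, Real.exp (-(x - a - c)^2 / (2 * σ^2))) /
        (∫ x in a..b, Real.exp (-(x - a)^2 / (2 * σ^2)))) :
    ∀ c ∈ Set.Icc (0:ℝ) ΔQ,
      R c ≤ R (if ΔQ ≤ (b - a) / 2 then ΔQ else (b - a) / 2) := by
  set f : ℝ → ℝ := fun y => Real.exp (-(y - a)^2 / (2 * σ^2)) with hf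
  have hfc : Continuous f := by fun_prop
  have hσ2 : (0:ℝ) < 2 * σ ^ 2 := by positivity
  -- change of variables for the numerator
  have hnum : ∀ c, (∫ x in a..b, Real.exp (-(x - a - c)^2 / (2 * σ^2)))
      = ∫ x in (a - c)..(b - c), f x := by
    intro c
    rw [← intervalIntegral.integral_comp_sub_right f c]
    congr 1
    funext x
    simp only [hf]
    ring_nf
  set G : ℝ → ℝ := fun x => ∫ t in a..x, f t with hG
  have hGderiv : ∀ x, HasDerivAt G (f x) x := fun x =>
    intervalIntegral.integral_hasDerivAt_right (hfc.intervalIntegrable _ _)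
      (hfc.stronglyMeasurableAtFilter _ _) hfc.continuousAt
  set F : ℝ → ℝ := fun c => G (b - c) - G (a - c) with hF
  have hFint : ∀ c, F c = ∫ x in (a - c)..(b - c), f x := by
    intro c
    rw [hF, hG]
    simp only
    rw [intervalIntegral.integral_interval_sub_left (hfc.intervalIntegrable _ _)
      (hfc.intervalIntegrable _ _)]
  have hFderiv : ∀ c, HasDerivAt F (f (a - c) - f (b - c)) c := by
    intro c
    have h1 : HasDerivAt (fun c => G (b - c)) (f (b - c) * (-1)) c :=
      (hGderiv (b - c)).comp c ((hasDerivAt_id c).const_sub b)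
    have h2 : HasDerivAt (fun c => G (a - c)) (f (a - c) * (-1)) c :=
      (hGderiv (a - c)).comp c ((hasDerivAt_id c).const_sub a)
    have := h1.sub h2
    rw [show f (a - c) - f (b - c) = f (b - c) * (-1) - f (a - c) * (-1) by ring]
    exact this
  have hFdiff : Differentiable ℝ F := fun c => (hFderiv c).differentiableAt
  have hderiv_eq : ∀ c, deriv F c = f (a - c) - f (b - c) := fun c => (hFderiv c).deriv
  -- monotone on [0, (b-a)/2]
  have hmono : MonotoneOn F (Set.Icc 0 ((b - a) / 2)) := by
    apply monotoneOn_of_deriv_nonneg (convex_Icc _ _) hFdiff.continuous.continuousOn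
      hFdiff.differentiableOn
    intro c hc
    rw [interior_Icc] at hc
    rw [hderiv_eq]
    have h1 : f (b - c) ≤ f (a - c) := by
      simp only [hf]
      apply Real.exp_le_exp.mpr
      apply (div_le_div_iff_of_pos_right hσ2).mpr
      nlinarith [hc.1, hc.2]
    linarith
  -- antitone on [(b-a)/2, b-a]
  have hanti : AntitoneOn F (Set.Icc ((b - a) / 2) (b - a)) := by
    apply antitoneOn_of_deriv_nonpos (convex_Icc _ _) hFdiff.continuous.continuousOn
      hFdiff.differentiableOn
    intro c hc
    rw [interior_Icc] at hc
    rw [hderiv_eq]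
    have h1 : f (a - c) ≤ f (b - c) := by
      simp only [hf]
      apply Real.exp_le_exp.mpr
      apply (div_le_div_iff_of_pos_right hσ2).mpr
      nlinarith [hc.1, hc.2]
    linarith
  -- positive denominator
  have hD : 0 < ∫ x in a..b, Real.exp (-(x - a)^2 / (2 * σ^2)) := by
    apply intervalIntegral.intervalIntegral_pos_of_pos_on (hfc.intervalIntegrable _ _)
      (fun x _ => Real.exp_pos _) hab
  intro c hc
  have hRF : ∀ c, R c = F c / ∫ x in a..b, Real.exp (-(x - a)^2 / (2 * σ^2)) := by
    intro c
    rw [hR, hnum, hFint]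
  rw [hRF, hRF]
  apply (div_le_div_iff_of_pos_right hD).mpr
  by_cases hcase : ΔQ ≤ (b - a) / 2
  · simp only [hcase, if_true]
    exact hmono ⟨hc.1, le_trans hc.2 hcase⟩ ⟨le_of_lt hΔ, hcase⟩ hc.2
  · simp only [hcase, if_false]
    push_neg at hcase
    rcases le_or_gt c ((b - a) / 2) with h | h
    · exact hmono ⟨hc.1, h⟩ ⟨by linarith, le_refl _⟩ h
    · exact hanti ⟨le_refl _, by linarith⟩ ⟨le_of_lt h, le_trans hc.2 hΔb⟩ (le_of_lt h)
end

section
/- For a < b, σ > 0, and 0 < c ≤ (b−a)/2, we have ∫_a^b exp(−(x−a−c)²/(2σ²)) dx > ∫_a^b exp(−(x−a)²/(2σ²)) dx; equivalently, the ratio ΔC(σ) = (∫_a^b exp(−(x−a−c)²/(2σ²)) dx)/(∫_a^b exp(−(x−a)²/(2σ²)) dx) satisfies ΔC(σ) > 1, hence ln(ΔC(σ)) > 0. -/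
open Real

theorem deltaC_gt_one (a b σ c : ℝ) (hab : a < b) (hσ : 0 < σ)
    (hc : 0 < c) (hcb : c ≤ (b - a) / 2) :
    (∫ x in a..b, Real.exp (-(x - a - c)^2 / (2 * σ^2))) >
      (∫ x in a..b, Real.exp (-(x - a)^2 / (2 * σ^2))) ∧
    (∫ x in a..b, Real.exp (-(x - a - c)^2 / (2 * σ^2))) /
      (∫ x in a..b, Real.exp (-(x - a)^2 / (2 * σ^2))) > 1 ∧
    Real.log ((∫ x in a..b, Real.exp (-(x - a - c)^2 / (2 * σ^2))) /
      (∫ x in a..b, Real.exp (-(x - a)^2 / (2 * σ^2)))) > 0 := by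
  have hσ2 : (0:ℝ) < 2 * σ^2 := by positivity
  set f : ℝ → ℝ := fun x => Real.exp (-(x - a)^2 / (2 * σ^2)) with hf
  have hfc : Continuous f := by
    apply Real.continuous_exp.comp
    fun_prop
  have hgc : Continuous (fun x => f (x + (b - a))) :=
    hfc.comp (continuous_id.add continuous_const)
  have hInt : ∀ u v : ℝ, IntervalIntegrable f MeasureTheory.volume u v :=
    fun u v => hfc.intervalIntegrable u v
  have key : (∫ x in a..b, Real.exp (-(x - a - c)^2 / (2 * σ^2)))
      = ∫ x in (a - c)..(b - c), f x := by
    have h := intervalIntegral.integral_comp_sub_right (a := a) (b := b) f c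
    rw [← h]
    simp only [hf]
    congr 1
    ext x
    ring_nf
  have split1 : (∫ x in (a - c)..(b - c), f x)
      = (∫ x in (a - c)..a, f x) + ∫ x in a..(b - c), f x :=
    (intervalIntegral.integral_add_adjacent_intervals (hInt _ _) (hInt _ _)).symm
  have split2 : (∫ x in a..b, f x)
      = (∫ x in a..(b - c), f x) + ∫ x in (b - c)..b, f x :=
    (intervalIntegral.integral_add_adjacent_intervals (hInt _ _) (hInt _ _)).symm
  have shift : (∫ x in (b - c)..b, f x) = ∫ x in (a - c)..a, f (x + (b - a)) := by
    have h := intervalIntegral.integral_comp_add_right (a := a - c) (b := a) f (b - a)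
    rw [h]
    congr 1 <;> ring
  have pos : 0 < ∫ x in (a - c)..a, (f x - f (x + (b - a))) := by
    apply intervalIntegral.intervalIntegral_pos_of_pos_on
    · exact (hfc.sub hgc).intervalIntegrable _ _
    · intro x hx
      obtain ⟨hx1, hx2⟩ := hx
      have hsq : (x - a)^2 < (x + (b - a) - a)^2 := by nlinarith
      have : -(x + (b - a) - a)^2 / (2 * σ^2) < -(x - a)^2 / (2 * σ^2) := by
        exact (div_lt_div_iff_of_pos_right hσ2).mpr (by linarith)
      simp only [hf, sub_pos]
      exact Real.exp_lt_exp.mpr this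
    · linarith
  have hdiff : (∫ x in a..b, Real.exp (-(x - a - c)^2 / (2 * σ^2)))
      - (∫ x in a..b, f x) = ∫ x in (a - c)..a, (f x - f (x + (b - a))) := by
    rw [key, split1, split2, shift,
      intervalIntegral.integral_sub (hInt _ _) (hgc.intervalIntegrable _ _)]
    ring
  have h1 : (∫ x in a..b, Real.exp (-(x - a - c)^2 / (2 * σ^2))) >
      ∫ x in a..b, f x := by linarith [hdiff ▸ pos]
  have hden : 0 < ∫ x in a..b, f x := by
    apply intervalIntegral.intervalIntegral_pos_of_pos_on (hInt _ _) _ hab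
    intro x _
    exact Real.exp_pos _
  have h2 : (∫ x in a..b, Real.exp (-(x - a - c)^2 / (2 * σ^2))) /
      (∫ x in a..b, f x) > 1 := (one_lt_div hden).mpr h1
  exact ⟨h1, h2, Real.log_pos h2⟩
end

section
/- For a < b, ΔQ > 0, ε > 0, and σ₀² = ((b−a) + ΔQ/2)·ΔQ/ε, with c = min(ΔQ, (b−a)/2), the quantity ΔC(σ₀) = (∫_a^b exp(−(x−a−c)²/(2σ₀²)) dx)/(∫_a^b exp(−(x−a)²/(2σ₀²)) dx) satisfies ΔC(σ₀) < exp(ε); consequently ε − ln(ΔC(σ₀)) > 0. -/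
open Real

theorem deltaC_sigma0_lt_exp_eps (a b ΔQ ε : ℝ) (hab : a < b)
    (hΔ : 0 < ΔQ) (hΔb : ΔQ ≤ b - a) (hε : 0 < ε)
    (σ₀ : ℝ) (hσ₀ : σ₀ = Real.sqrt (((b - a) + ΔQ / 2) * ΔQ / ε))
    (c : ℝ) (hc : c = min ΔQ ((b - a) / 2)) :
    (∫ x in a..b, Real.exp (-(x - a - c)^2 / (2 * σ₀^2))) /
      (∫ x in a..b, Real.exp (-(x - a)^2 / (2 * σ₀^2))) < Real.exp ε ∧
    0 < ε - Real.log ((∫ x in a..b, Real.exp (-(x - a - c)^2 / (2 * σ₀^2))) /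
      (∫ x in a..b, Real.exp (-(x - a)^2 / (2 * σ₀^2)))) := by
  have hc0 : 0 < c := by
    rw [hc]; exact lt_min hΔ (by linarith)
  have hcΔ : c ≤ ΔQ := by rw [hc]; exact min_le_left _ _
  have harg : 0 < ((b - a) + ΔQ / 2) * ΔQ / ε := div_pos (mul_pos (by linarith) hΔ) hε
  have hσsq : σ₀ ^ 2 = ((b - a) + ΔQ / 2) * ΔQ / ε := by
    rw [hσ₀, sq_sqrt harg.le]
  have hσpos : 0 < σ₀ ^ 2 := hσsq ▸ harg
  set M : ℝ := c * (2 * (b - a) - c) / (2 * σ₀ ^ 2) with hM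
  have hMε : M < ε := by
    rw [hM, div_lt_iff₀ (by positivity)]
    rw [hσsq]
    have : ε * (2 * (((b - a) + ΔQ / 2) * ΔQ / ε)) = (2 * (b - a) + ΔQ) * ΔQ := by
      field_simp
    rw [this]
    nlinarith [mul_pos hc0 hΔ, mul_nonneg (sub_nonneg.2 hcΔ) (by linarith : (0:ℝ) ≤ 2 * (b - a))]
  have hcont1 : Continuous fun x : ℝ => Real.exp (-(x - a - c)^2 / (2 * σ₀^2)) := by
    continuity
  have hcont2 : Continuous fun x : ℝ => Real.exp (-(x - a)^2 / (2 * σ₀^2)) := by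
    continuity
  have hD : 0 < ∫ x in a..b, Real.exp (-(x - a)^2 / (2 * σ₀^2)) := by
    apply intervalIntegral.intervalIntegral_pos_of_pos_on
      (hcont2.intervalIntegrable a b)
    · intro x _; exact Real.exp_pos _
    · exact hab
  have hN : (∫ x in a..b, Real.exp (-(x - a - c)^2 / (2 * σ₀^2)))
      ≤ Real.exp M * ∫ x in a..b, Real.exp (-(x - a)^2 / (2 * σ₀^2)) := by
    rw [← intervalIntegral.integral_const_mul]
    apply intervalIntegral.integral_mono_on hab.le
      (hcont1.intervalIntegrable a b)
      ((continuous_const.mul hcont2).intervalIntegrable a b)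
    intro x hx
    simp only [Pi.mul_apply]
    rw [← Real.exp_add, Real.exp_le_exp]
    rw [hM, ← add_div, div_le_div_iff₀ (by positivity) (by positivity)]
    have hxb : x ≤ b := hx.2
    nlinarith [mul_nonneg hc0.le (sub_nonneg.2 hxb)]
  have hlt : (∫ x in a..b, Real.exp (-(x - a - c)^2 / (2 * σ₀^2))) /
      (∫ x in a..b, Real.exp (-(x - a)^2 / (2 * σ₀^2))) < Real.exp ε := by
    rw [div_lt_iff₀ hD]
    calc (∫ x in a..b, Real.exp (-(x - a - c)^2 / (2 * σ₀^2)))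
        ≤ Real.exp M * ∫ x in a..b, Real.exp (-(x - a)^2 / (2 * σ₀^2)) := hN
      _ < Real.exp ε * ∫ x in a..b, Real.exp (-(x - a)^2 / (2 * σ₀^2)) := by
          exact mul_lt_mul_of_pos_right (Real.exp_lt_exp.2 hMε) hD
  refine ⟨hlt, ?_⟩
  have hNpos : 0 < ∫ x in a..b, Real.exp (-(x - a - c)^2 / (2 * σ₀^2)) := by
    apply intervalIntegral.intervalIntegral_pos_of_pos_on
      (hcont1.intervalIntegrable a b)
    · intro x _; exact Real.exp_pos _
    · exact hab
  have : Real.log ((∫ x in a..b, Real.exp (-(x - a - c)^2 / (2 * σ₀^2))) /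
      (∫ x in a..b, Real.exp (-(x - a)^2 / (2 * σ₀^2)))) < ε := by
    calc _ < Real.log (Real.exp ε) := Real.log_lt_log (div_pos hNpos hD) hlt
      _ = ε := Real.log_exp ε
  linarith
end

section
/- For a < b, σ > 0, 0 < c ≤ (b−a)/2, the ratio ΔC(σ) = (∫_a^b exp(−(x−a−c)²/(2σ²)) dx)/(∫_a^b exp(−(x−a)²/(2σ²)) dx) is strictly decreasing in σ on (0,∞). -/
open Real

private lemma gauss_cont (s : ℝ) : Continuous fun u : ℝ => Real.exp (-s * u ^ 2) :=
  (continuous_const.mul (continuous_pow 2)).rexp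

private lemma gauss_ii (s x y : ℝ) :
    IntervalIntegrable (fun u : ℝ => Real.exp (-s * u ^ 2)) MeasureTheory.volume x y :=
  (gauss_cont s).intervalIntegrable x y

private lemma gauss_pos (s x y : ℝ) (hxy : x < y) :
    0 < ∫ u in x..y, Real.exp (-s * u ^ 2) :=
  intervalIntegral.intervalIntegral_pos_of_pos_on (gauss_ii s x y)
    (fun u _ => Real.exp_pos _) hxy

/-- Core comparison: for `0 < p < q` and `s₂ < s₁`,
`(∫₀^p f₂)(∫₀^q f₁) < (∫₀^p f₁)(∫₀^q f₂)` where `fᵢ u = exp (-sᵢ u²)`. -/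
private lemma core (p q s₁ s₂ : ℝ) (hp : 0 < p) (hpq : p < q) (hs : s₂ < s₁) :
    (∫ u in (0:ℝ)..p, Real.exp (-s₂ * u ^ 2)) * (∫ u in (0:ℝ)..q, Real.exp (-s₁ * u ^ 2)) <
    (∫ u in (0:ℝ)..p, Real.exp (-s₁ * u ^ 2)) * (∫ u in (0:ℝ)..q, Real.exp (-s₂ * u ^ 2)) := by
  set t : ℝ := s₁ - s₂ with ht
  have htpos : 0 < t := by simp [ht]; linarith
  set E : ℝ := Real.exp (-t * p ^ 2) with hE
  -- factorization f₁ u = exp(-t u²) * f₂ u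
  have hfac : ∀ u : ℝ, Real.exp (-s₁ * u ^ 2)
      = Real.exp (-t * u ^ 2) * Real.exp (-s₂ * u ^ 2) := by
    intro u
    rw [← Real.exp_add, ht]
    ring_nf
  -- split ∫₀^q = ∫₀^p + ∫_p^q
  have hsplit : ∀ s : ℝ, (∫ u in (0:ℝ)..q, Real.exp (-s * u ^ 2))
      = (∫ u in (0:ℝ)..p, Real.exp (-s * u ^ 2)) + ∫ u in p..q, Real.exp (-s * u ^ 2) :=
    fun s => (intervalIntegral.integral_add_adjacent_intervals (gauss_ii s 0 p) (gauss_ii s p q)).symm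
  -- strict inequality on [0,p]
  have h1 : E * (∫ u in (0:ℝ)..p, Real.exp (-s₂ * u ^ 2))
      < ∫ u in (0:ℝ)..p, Real.exp (-s₁ * u ^ 2) := by
    have hpos : 0 < ∫ u in (0:ℝ)..p,
        (Real.exp (-s₁ * u ^ 2) - E * Real.exp (-s₂ * u ^ 2)) := by
      apply intervalIntegral.intervalIntegral_pos_of_pos_on
      · exact (gauss_ii s₁ 0 p).sub ((gauss_ii s₂ 0 p).const_mul E)
      · intro u hu
        have hu2 : u ^ 2 < p ^ 2 := by nlinarith [hu.1, hu.2]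
        have : E < Real.exp (-t * u ^ 2) := by
          apply Real.exp_lt_exp.mpr
          nlinarith
        have h2pos : 0 < Real.exp (-s₂ * u ^ 2) := Real.exp_pos _
        rw [hfac u]
        nlinarith
      · exact hp
    rw [intervalIntegral.integral_sub (gauss_ii s₁ 0 p) ((gauss_ii s₂ 0 p).const_mul E),
      intervalIntegral.integral_const_mul] at hpos
    linarith
  -- weak inequality on [p,q]
  have h2 : (∫ u in p..q, Real.exp (-s₁ * u ^ 2))
      ≤ E * ∫ u in p..q, Real.exp (-s₂ * u ^ 2) := by
    rw [← intervalIntegral.integral_const_mul]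
    apply intervalIntegral.integral_mono_on hpq.le (gauss_ii s₁ p q)
      ((gauss_ii s₂ p q).const_mul E)
    intro u hu
    have hu2 : p ^ 2 ≤ u ^ 2 := by nlinarith [hu.1, hp]
    have hle : Real.exp (-t * u ^ 2) ≤ E := Real.exp_le_exp.mpr (by nlinarith)
    have h2pos : 0 < Real.exp (-s₂ * u ^ 2) := Real.exp_pos _
    rw [hfac u]
    nlinarith
  have A2pos : 0 < ∫ u in (0:ℝ)..p, Real.exp (-s₂ * u ^ 2) := gauss_pos s₂ 0 p hp
  have B2pos : 0 < ∫ u in p..q, Real.exp (-s₂ * u ^ 2) := gauss_pos s₂ p q hpq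
  rw [hsplit s₁, hsplit s₂]
  nlinarith [mul_le_mul_of_nonneg_left h2 A2pos.le, mul_lt_mul_of_pos_right h1 B2pos]

private lemma den_eq (a b σ : ℝ) :
    (∫ x in a..b, Real.exp (-(x - a) ^ 2 / (2 * σ ^ 2)))
      = ∫ u in (0:ℝ)..(b - a), Real.exp (-(1 / (2 * σ ^ 2)) * u ^ 2) := by
  have h : (∫ x in a..b, Real.exp (-(x - a) ^ 2 / (2 * σ ^ 2)))
      = ∫ x in a..b, (fun u : ℝ => Real.exp (-(1 / (2 * σ ^ 2)) * u ^ 2)) (x - a) := by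
    apply intervalIntegral.integral_congr
    intro x _
    simp only
    ring_nf
  rw [h, intervalIntegral.integral_comp_sub_right (fun u : ℝ => Real.exp (-(1 / (2 * σ ^ 2)) * u ^ 2)) a]
  simp

private lemma num_eq (a b c σ : ℝ) :
    (∫ x in a..b, Real.exp (-(x - a - c) ^ 2 / (2 * σ ^ 2)))
      = (∫ u in (0:ℝ)..c, Real.exp (-(1 / (2 * σ ^ 2)) * u ^ 2))
        + ∫ u in (0:ℝ)..(b - a - c), Real.exp (-(1 / (2 * σ ^ 2)) * u ^ 2) := by
  set s : ℝ := 1 / (2 * σ ^ 2) with hs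
  have h : (∫ x in a..b, Real.exp (-(x - a - c) ^ 2 / (2 * σ ^ 2)))
      = ∫ x in a..b, (fun u : ℝ => Real.exp (-s * u ^ 2)) (x - (a + c)) := by
    apply intervalIntegral.integral_congr
    intro x _
    simp only [hs]
    ring_nf
  rw [h, intervalIntegral.integral_comp_sub_right (fun u : ℝ => Real.exp (-s * u ^ 2)) (a + c)]
  have h2 : a - (a + c) = -c := by ring
  have h3 : b - (a + c) = b - a - c := by ring
  rw [h2, h3,
    ← intervalIntegral.integral_add_adjacent_intervals (gauss_ii s (-c) 0) (gauss_ii s 0 (b - a - c))]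
  congr 1
  have hneg : (∫ u in (0:ℝ)..c, Real.exp (-s * u ^ 2))
      = ∫ u in (0:ℝ)..c, (fun v : ℝ => Real.exp (-s * v ^ 2)) (-u) := by
    apply intervalIntegral.integral_congr
    intro x _
    simp only
    ring_nf
  rw [hneg, intervalIntegral.integral_comp_neg (fun v : ℝ => Real.exp (-s * v ^ 2))]
  simp

theorem deltaC_strict_anti_in_sigma (a b c : ℝ) (hab : a < b)
    (hc : 0 < c) (hcb : c ≤ (b - a) / 2)
    (ΔC : ℝ → ℝ)
    (hΔC : ∀ σ, ΔC σ = (∫ x in a..b, Real.exp (-(x - a - c)^2 / (2 * σ^2))) /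
        (∫ x in a..b, Real.exp (-(x - a)^2 / (2 * σ^2)))) :
    ∀ σ₁ σ₂, 0 < σ₁ → σ₁ < σ₂ → ΔC σ₁ > ΔC σ₂ := by
  intro σ₁ σ₂ hσ₁ h12
  have hσ₂ : 0 < σ₂ := hσ₁.trans h12
  set s₁ : ℝ := 1 / (2 * σ₁ ^ 2) with hs1
  set s₂ : ℝ := 1 / (2 * σ₂ ^ 2) with hs2
  have hs : s₂ < s₁ := by
    apply one_div_lt_one_div_of_lt (by positivity)
    nlinarith
  have hL : 0 < b - a := by linarith
  have hcL : c < b - a := by linarith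
  have hlc : 0 < b - a - c := by linarith
  have hlcL : b - a - c < b - a := by linarith
  have hD₁ : 0 < ∫ u in (0:ℝ)..(b - a), Real.exp (-s₁ * u ^ 2) := gauss_pos _ _ _ hL
  have hD₂ : 0 < ∫ u in (0:ℝ)..(b - a), Real.exp (-s₂ * u ^ 2) := gauss_pos _ _ _ hL
  have key₁ := core c (b - a) s₁ s₂ hc hcL hs
  have key₂ := core (b - a - c) (b - a) s₁ s₂ hlc hlcL hs
  rw [hΔC σ₁, hΔC σ₂, num_eq a b c σ₁, num_eq a b c σ₂, den_eq a b σ₁, den_eq a b σ₂,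
    ← hs1, ← hs2]
  rw [gt_iff_lt, div_lt_div_iff₀ hD₂ hD₁]
  nlinarith [key₁, key₂]
end

section
/- For a < b, 0 < ΔQ ≤ b − a, ε > 0, define c = min(ΔQ,(b−a)/2), ΔC(σ) = (∫_a^b exp(−(x−a−c)²/(2σ²)) dx)/(∫_a^b exp(−(x−a)²/(2σ²)) dx), σ₀ = √(((b−a)+ΔQ/2)ΔQ/ε), and f(σ) = σ² − ((b−a)+ΔQ/2)·ΔQ/(ε − ln ΔC(σ)). Then f(σ₀) < 0. -/
open Real

theorem f_sigma0_neg (a b ΔQ ε : ℝ) (hab : a < b)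
    (hΔ : 0 < ΔQ) (hΔb : ΔQ ≤ b - a) (hε : 0 < ε)
    (c : ℝ) (hc : c = min ΔQ ((b - a) / 2))
    (ΔC : ℝ → ℝ)
    (hΔC : ∀ σ, ΔC σ = (∫ x in a..b, Real.exp (-(x - a - c)^2 / (2 * σ^2))) /
        (∫ x in a..b, Real.exp (-(x - a)^2 / (2 * σ^2))))
    (σ₀ : ℝ) (hσ₀ : σ₀ = Real.sqrt (((b - a) + ΔQ / 2) * ΔQ / ε))
    (f : ℝ → ℝ)
    (hf : ∀ σ, f σ = σ^2 - ((b - a) + ΔQ / 2) * ΔQ / (ε - Real.log (ΔC σ))) :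
    f σ₀ < 0 := by
  set K : ℝ := ((b - a) + ΔQ / 2) * ΔQ with hK
  have hKpos : 0 < K := by
    apply mul_pos _ hΔ
    nlinarith
  have hcpos : 0 < c := by
    rw [hc]
    exact lt_min hΔ (by linarith)
  have hcΔ : c ≤ ΔQ := hc ▸ min_le_left _ _
  have hc2 : c ≤ (b - a) / 2 := hc ▸ min_le_right _ _
  have hσsq : σ₀ ^ 2 = K / ε := by
    rw [hσ₀, Real.sq_sqrt (by positivity)]
  have hσpos : 0 < σ₀ := by
    rw [hσ₀]
    exact Real.sqrt_pos.2 (by positivity)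
  set g : ℝ → ℝ := fun t => Real.exp (-t ^ 2 / (2 * σ₀ ^ 2)) with hg
  have hgcont : Continuous g := by
    apply Real.continuous_exp.comp
    fun_prop
  have hgint : ∀ u v : ℝ, IntervalIntegrable g MeasureTheory.volume u v :=
    fun u v => hgcont.intervalIntegrable u v
  set d : ℝ := b - a - c with hd
  have hdpos : 0 < d := by
    have : c ≤ (b - a) / 2 := hc2
    simp only [hd]; linarith
  have hI₁ : (∫ x in a..b, Real.exp (-(x - a - c)^2 / (2 * σ₀^2)))
      = ∫ x in (-c)..d, g x := by
    have h1 : (∫ x in a..b, Real.exp (-(x - a - c)^2 / (2 * σ₀^2)))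
        = ∫ x in a..b, g (x - (a + c)) := by
      apply intervalIntegral.integral_congr
      intro x _
      simp only [hg]
      ring_nf
    rw [h1, intervalIntegral.integral_comp_sub_right g (a + c)]
    have e1 : a - (a + c) = -c := by ring
    have e2 : b - (a + c) = d := by simp only [hd]; ring
    rw [e1, e2]
  have hI₂ : (∫ x in a..b, Real.exp (-(x - a)^2 / (2 * σ₀^2)))
      = ∫ x in (0:ℝ)..(b - a), g x := by
    have h1 : (∫ x in a..b, Real.exp (-(x - a)^2 / (2 * σ₀^2)))
        = ∫ x in a..b, g (x - a) := rfl
    rw [h1, intervalIntegral.integral_comp_sub_right g a, sub_self]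
  -- positivity of denominator integral
  have hI₂pos : 0 < ∫ x in (0:ℝ)..(b - a), g x :=
    intervalIntegral.intervalIntegral_pos_of_pos (hgint 0 (b - a))
      (fun x => Real.exp_pos _) (by linarith)
  -- I₁ > I₂
  have hsplit1 : (∫ x in (-c)..d, g x)
      = (∫ x in (-c)..(0:ℝ), g x) + ∫ x in (0:ℝ)..d, g x :=
    (intervalIntegral.integral_add_adjacent_intervals (hgint _ _) (hgint _ _)).symm
  have hsplit2 : (∫ x in (0:ℝ)..(b - a), g x)
      = (∫ x in (0:ℝ)..d, g x) + ∫ x in d..(b - a), g x :=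
    (intervalIntegral.integral_add_adjacent_intervals (hgint _ _) (hgint _ _)).symm
  have heven : (∫ x in (-c)..(0:ℝ), g x) = ∫ x in (0:ℝ)..c, g x := by
    rw [show (∫ x in (0:ℝ)..c, g x) = ∫ x in (0:ℝ)..c, g (-x) from
      intervalIntegral.integral_congr (fun x _ => by simp [hg, neg_sq]),
      intervalIntegral.integral_comp_neg g]
    simp
  have hshift : (∫ x in d..(b - a), g x) = ∫ x in (0:ℝ)..c, g (x + d) := by
    rw [intervalIntegral.integral_comp_add_right g d, zero_add]
    have : c + d = b - a := by simp only [hd]; ring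
    rw [this]
  have hcont2 : Continuous (fun x : ℝ => g (x + d)) :=
    hgcont.comp (continuous_id.add continuous_const)
  have hint2 : IntervalIntegrable (fun x : ℝ => g (x + d)) MeasureTheory.volume 0 c :=
    hcont2.intervalIntegrable 0 c
  have hdiffpos : 0 < (∫ x in (0:ℝ)..c, g x) - ∫ x in (0:ℝ)..c, g (x + d) := by
    rw [← intervalIntegral.integral_sub (hgint 0 c) hint2]
    apply intervalIntegral.intervalIntegral_pos_of_pos_on
    · exact (hgcont.sub hcont2).intervalIntegrable 0 c
    · intro x hx
      have hx0 : 0 < x := hx.1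
      have : x ^ 2 < (x + d) ^ 2 := by nlinarith
      have : -(x + d) ^ 2 / (2 * σ₀ ^ 2) < -x ^ 2 / (2 * σ₀ ^ 2) := by
        apply div_lt_div_of_pos_right (by linarith) (by positivity)
      simpa [hg, sub_pos] using Real.exp_lt_exp.2 this
    · exact hcpos
  have hgt : (∫ x in (0:ℝ)..(b - a), g x) < ∫ x in (-c)..d, g x := by
    rw [hsplit1, hsplit2, heven, hshift]
    linarith
  -- I₁ < exp ε * I₂
  have hub : (∫ x in a..b, Real.exp (-(x - a - c)^2 / (2 * σ₀^2)))
      < Real.exp ε * ∫ x in a..b, Real.exp (-(x - a)^2 / (2 * σ₀^2)) := by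
    rw [← intervalIntegral.integral_const_mul]
    apply intervalIntegral.integral_lt_integral_of_continuousOn_of_le_of_exists_lt hab
    · apply Continuous.continuousOn; fun_prop
    · apply Continuous.continuousOn; fun_prop
    · intro x hx
      have hxb : x ≤ b := hx.2
      have hKε : σ₀ ^ 2 * ε = K := by
        rw [hσsq]; field_simp
      have hσ2 : (0:ℝ) < σ₀ ^ 2 := by positivity
      have key : -(x - a - c) ^ 2 / (2 * σ₀ ^ 2) < ε + -(x - a) ^ 2 / (2 * σ₀ ^ 2) := by
        rw [← sub_pos]
        have heq : ε + -(x - a) ^ 2 / (2 * σ₀ ^ 2) - -(x - a - c) ^ 2 / (2 * σ₀ ^ 2)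
            = (2 * (σ₀ ^ 2 * ε) - ((x - a) ^ 2 - (x - a - c) ^ 2)) / (2 * σ₀ ^ 2) := by
          field_simp
          ring
        rw [heq, hKε]
        apply div_pos _ (by positivity)
        nlinarith [sq_nonneg c, mul_pos hcpos hcpos, mul_pos hcpos hΔ]
      have := Real.exp_lt_exp.2 key
      rw [Real.exp_add] at this
      exact this.le
    · refine ⟨a, ⟨le_refl a, hab.le⟩, ?_⟩
      have key : -(a - a - c) ^ 2 / (2 * σ₀ ^ 2) < ε + -(a - a) ^ 2 / (2 * σ₀ ^ 2) := by
        have h1 : -(a - a - c) ^ 2 / (2 * σ₀ ^ 2) < 0 := by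
          apply div_neg_of_neg_of_pos _ (by positivity)
          have : (a - a - c) ^ 2 = c ^ 2 := by ring
          rw [this]; exact neg_lt_zero.mpr (by positivity)
        have h2 : (0:ℝ) < ε + -(a - a) ^ 2 / (2 * σ₀ ^ 2) := by
          simp [hε]
        linarith
      calc Real.exp (-(a - a - c) ^ 2 / (2 * σ₀ ^ 2))
          < Real.exp (ε + -(a - a) ^ 2 / (2 * σ₀ ^ 2)) := Real.exp_lt_exp.2 key
        _ = Real.exp ε * Real.exp (-(a - a) ^ 2 / (2 * σ₀ ^ 2)) := Real.exp_add _ _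
  -- bounds on ΔC σ₀
  have hI₂pos' : 0 < ∫ x in a..b, Real.exp (-(x - a)^2 / (2 * σ₀^2)) := hI₂ ▸ hI₂pos
  have hΔC1 : 1 < ΔC σ₀ := by
    rw [hΔC σ₀, lt_div_iff₀ hI₂pos', one_mul, hI₁, hI₂]
    exact hgt
  have hΔC2 : ΔC σ₀ < Real.exp ε := by
    rw [hΔC σ₀, div_lt_iff₀ hI₂pos']
    exact hub
  have hLpos : 0 < Real.log (ΔC σ₀) := Real.log_pos hΔC1
  have hLlt : Real.log (ΔC σ₀) < ε := by
    have := Real.log_lt_log (by linarith : (0:ℝ) < ΔC σ₀) hΔC2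
    rwa [Real.log_exp] at this
  rw [hf σ₀, hσsq, sub_neg]
  exact div_lt_div_of_pos_left hKpos (by linarith) (by linarith)
end

section
/- For a < b, 0 < ΔQ ≤ b − a, ε > 0, with c, ΔC, σ₀, f as above, f is strictly increasing on [σ₀, ∞): for σ₀ ≤ σ₁ < σ₂ one has f(σ₁) < f(σ₂). -/
open Real

noncomputable def gg (σ x : ℝ) : ℝ := Real.exp (-x^2 / (2*σ^2))
lemma gg_cont (σ : ℝ) : Continuous (gg σ) := by unfold gg; fun_prop
lemma gg_pos (σ x : ℝ) : 0 < gg σ x := Real.exp_pos _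
lemma gg_int (σ p q : ℝ) : IntervalIntegrable (gg σ) MeasureTheory.volume p q :=
  (gg_cont σ).intervalIntegrable p q
lemma gg_mul_le {σ₁ σ₂ t u : ℝ} (h1 : 0 < σ₁) (h12 : σ₁ ≤ σ₂) (ht : 0 ≤ t) (htu : t ≤ u) :
    gg σ₁ u * gg σ₂ t ≤ gg σ₂ u * gg σ₁ t := by
  unfold gg
  rw [← Real.exp_add, ← Real.exp_add]
  apply Real.exp_le_exp.2
  have hs1 : (0:ℝ) < 2*σ₁^2 := by nlinarith
  have hs2 : (0:ℝ) < 2*σ₂^2 := by nlinarith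
  have hinv : (2*σ₂^2)⁻¹ ≤ (2*σ₁^2)⁻¹ := by
    apply inv_anti₀ hs1; nlinarith
  have htu2 : t^2 ≤ u^2 := by nlinarith
  have key : 0 ≤ (u^2 - t^2) * ((2*σ₁^2)⁻¹ - (2*σ₂^2)⁻¹) :=
    mul_nonneg (by linarith) (by linarith)
  simp only [div_eq_mul_inv]
  nlinarith [key]

lemma gg_diff_mul_le {σ₁ σ₂ t u s : ℝ} (h1 : 0 < σ₁) (h12 : σ₁ ≤ σ₂) (ht : 0 ≤ t)
    (htu : t ≤ u) (hs : 0 ≤ s) :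
    (gg σ₂ t - gg σ₂ (t+s)) * gg σ₁ u ≤ (gg σ₁ t - gg σ₁ (t+s)) * gg σ₂ u := by
  have hw : 0 ≤ 2*t*s + s^2 := by nlinarith
  have hs1 : (0:ℝ) < 2*σ₁^2 := by nlinarith
  have hs2 : (0:ℝ) < 2*σ₂^2 := by nlinarith
  have hspl : ∀ σ : ℝ, gg σ (t+s) = gg σ t * Real.exp (-(2*t*s+s^2)/(2*σ^2)) := by
    intro σ
    unfold gg
    rw [← Real.exp_add, ← add_div]
    congr 1
    ring
  have hinv : (2*σ₂^2)⁻¹ ≤ (2*σ₁^2)⁻¹ := by apply inv_anti₀ hs1; nlinarith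
  have hEle : Real.exp (-(2*t*s+s^2)/(2*σ₁^2)) ≤ Real.exp (-(2*t*s+s^2)/(2*σ₂^2)) := by
    apply Real.exp_le_exp.2
    simp only [div_eq_mul_inv]
    nlinarith [mul_nonneg hw (sub_nonneg.2 hinv)]
  have hE2le1 : Real.exp (-(2*t*s+s^2)/(2*σ₂^2)) ≤ 1 := by
    apply Real.exp_le_one_iff.2
    apply div_nonpos_of_nonpos_of_nonneg (by linarith) hs2.le
  have hmul := gg_mul_le h1 h12 ht htu
  rw [hspl σ₁, hspl σ₂]
  calc (gg σ₂ t - gg σ₂ t * Real.exp (-(2*t*s+s^2)/(2*σ₂^2))) * gg σ₁ u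
      = (gg σ₁ u * gg σ₂ t) * (1 - Real.exp (-(2*t*s+s^2)/(2*σ₂^2))) := by ring
    _ ≤ (gg σ₂ u * gg σ₁ t) * (1 - Real.exp (-(2*t*s+s^2)/(2*σ₁^2))) := by
        apply mul_le_mul hmul (by linarith) (by linarith)
        exact (mul_pos (gg_pos _ _) (gg_pos _ _)).le
    _ = (gg σ₁ t - gg σ₁ t * Real.exp (-(2*t*s+s^2)/(2*σ₁^2))) * gg σ₂ u := by ring

lemma key_ratio {σ₁ σ₂ c s : ℝ} (h1 : 0 < σ₁) (h12 : σ₁ ≤ σ₂) (hc : 0 < c) (hcs : c ≤ s) :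
    (∫ x in (-c)..s, gg σ₂ x) * (∫ x in (0:ℝ)..(s+c), gg σ₁ x) ≤
    (∫ x in (-c)..s, gg σ₁ x) * (∫ x in (0:ℝ)..(s+c), gg σ₂ x) := by
  have hcont : ∀ σ d : ℝ, Continuous (fun t => gg σ (t + d)) := fun σ d =>
    (gg_cont σ).comp (continuous_id.add continuous_const)
  -- evenness: ∫_{-c}^0 = ∫_0^c
  have hNeg : ∀ σ : ℝ, (∫ x in (-c)..(0:ℝ), gg σ x) = ∫ x in (0:ℝ)..c, gg σ x := by
    intro σ
    have h := intervalIntegral.integral_comp_neg (a := (0:ℝ)) (b := c) (f := gg σ)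
    simp only [neg_zero] at h
    rw [← h]
    apply intervalIntegral.integral_congr
    intro x _
    simp [gg, neg_sq]
  -- split N
  have hN : ∀ σ : ℝ, (∫ x in (-c)..s, gg σ x)
      = (∫ x in (0:ℝ)..c, gg σ x) + ∫ x in (0:ℝ)..s, gg σ x := by
    intro σ
    rw [← hNeg σ, intervalIntegral.integral_add_adjacent_intervals (gg_int σ _ _) (gg_int σ _ _)]
  have hD : ∀ σ : ℝ, (∫ x in (0:ℝ)..(s+c), gg σ x)
      = (∫ x in (0:ℝ)..s, gg σ x) + ∫ x in s..(s+c), gg σ x := by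
    intro σ
    rw [intervalIntegral.integral_add_adjacent_intervals (gg_int σ _ _) (gg_int σ _ _)]
  have hD' : ∀ σ : ℝ, (∫ x in (0:ℝ)..(s+c), gg σ x)
      = (∫ x in (0:ℝ)..c, gg σ x) + ∫ x in c..(s+c), gg σ x := by
    intro σ
    rw [intervalIntegral.integral_add_adjacent_intervals (gg_int σ _ _) (gg_int σ _ _)]
  -- S as shifted integral
  have hS : ∀ σ : ℝ, (∫ x in s..(s+c), gg σ x) = ∫ t in (0:ℝ)..c, gg σ (t + s) := by
    intro σ
    rw [intervalIntegral.integral_comp_add_right (a := (0:ℝ)) (b := c) (f := gg σ) s]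
    rw [zero_add, add_comm c s]
  -- hSA : S₁ * A₂ ≤ S₂ * A₁
  have hSA : (∫ x in s..(s+c), gg σ₁ x) * (∫ x in (0:ℝ)..c, gg σ₂ x)
      ≤ (∫ x in s..(s+c), gg σ₂ x) * (∫ x in (0:ℝ)..c, gg σ₁ x) := by
    rw [← intervalIntegral.integral_mul_const, ← intervalIntegral.integral_mul_const]
    apply intervalIntegral.integral_mono_on (by linarith)
      (((gg_cont σ₁).mul continuous_const).intervalIntegrable _ _)
      (((gg_cont σ₂).mul continuous_const).intervalIntegrable _ _)
    intro u hu
    simp only [Pi.mul_apply]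
    rw [← intervalIntegral.integral_const_mul, ← intervalIntegral.integral_const_mul]
    apply intervalIntegral.integral_mono_on hc.le
      ((continuous_const.mul (gg_cont σ₂)).intervalIntegrable _ _)
      ((continuous_const.mul (gg_cont σ₁)).intervalIntegrable _ _)
    intro t ht
    exact gg_mul_le h1 h12 ht.1 (ht.2.trans (hcs.trans hu.1))
  -- hER : E₂ * R₁ ≤ E₁ * R₂
  have hER : ((∫ x in (0:ℝ)..c, gg σ₂ x) - ∫ x in s..(s+c), gg σ₂ x) * (∫ x in c..(s+c), gg σ₁ x)
      ≤ ((∫ x in (0:ℝ)..c, gg σ₁ x) - ∫ x in s..(s+c), gg σ₁ x) * (∫ x in c..(s+c), gg σ₂ x) := by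
    have hE : ∀ σ : ℝ, (∫ x in (0:ℝ)..c, gg σ x) - (∫ x in s..(s+c), gg σ x)
        = ∫ t in (0:ℝ)..c, (gg σ t - gg σ (t + s)) := by
      intro σ
      rw [hS σ, ← intervalIntegral.integral_sub (gg_int σ _ _)
        ((hcont σ s).intervalIntegrable _ _)]
    rw [hE σ₁, hE σ₂, ← intervalIntegral.integral_mul_const, ← intervalIntegral.integral_mul_const]
    apply intervalIntegral.integral_mono_on hc.le
      ((((gg_cont σ₂).sub (hcont σ₂ s)).mul continuous_const).intervalIntegrable _ _)
      ((((gg_cont σ₁).sub (hcont σ₁ s)).mul continuous_const).intervalIntegrable _ _)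
    intro t ht
    simp only [Pi.mul_apply, Pi.sub_apply]
    rw [← intervalIntegral.integral_const_mul, ← intervalIntegral.integral_const_mul]
    apply intervalIntegral.integral_mono_on (by linarith)
      ((continuous_const.mul (gg_cont σ₁)).intervalIntegrable _ _)
      ((continuous_const.mul (gg_cont σ₂)).intervalIntegrable _ _)
    intro u hu
    exact gg_diff_mul_le h1 h12 ht.1 (ht.2.trans hu.1) (by linarith)
  set a1 := ∫ x in (0:ℝ)..c, gg σ₁ x with ha1
  set a2 := ∫ x in (0:ℝ)..c, gg σ₂ x with ha2
  set m1 := ∫ x in (0:ℝ)..s, gg σ₁ x with hm1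
  set m2 := ∫ x in (0:ℝ)..s, gg σ₂ x with hm2
  set s1 := ∫ x in s..(s+c), gg σ₁ x with hs1
  set s2 := ∫ x in s..(s+c), gg σ₂ x with hs2
  set r1 := ∫ x in c..(s+c), gg σ₁ x with hr1
  set r2 := ∫ x in c..(s+c), gg σ₂ x with hr2
  have e1 : r1 = m1 + s1 - a1 := by linarith [hD σ₁, hD' σ₁]
  have e2 : r2 = m2 + s2 - a2 := by linarith [hD σ₂, hD' σ₂]
  rw [e1, e2] at hER
  rw [hN σ₁, hN σ₂, hD σ₁, hD σ₂]
  nlinarith [hSA, hER]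


theorem f_strict_mono (a b ΔQ ε : ℝ) (hab : a < b)
    (hΔ : 0 < ΔQ) (hΔb : ΔQ ≤ b - a) (hε : 0 < ε)
    (c : ℝ) (hc : c = min ΔQ ((b - a) / 2))
    (ΔC : ℝ → ℝ)
    (hΔC : ∀ σ, ΔC σ = (∫ x in a..b, Real.exp (-(x - a - c)^2 / (2 * σ^2))) /
        (∫ x in a..b, Real.exp (-(x - a)^2 / (2 * σ^2))))
    (σ₀ : ℝ) (hσ₀ : σ₀ = Real.sqrt (((b - a) + ΔQ / 2) * ΔQ / ε))
    (f : ℝ → ℝ)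
    (hf : ∀ σ, f σ = σ^2 - ((b - a) + ΔQ / 2) * ΔQ / (ε - Real.log (ΔC σ))) :
    ∀ σ₁ σ₂, σ₀ ≤ σ₁ → σ₁ < σ₂ → f σ₁ < f σ₂ := by
  have hℓ : 0 < b - a := by linarith
  have hcpos : 0 < c := by rw [hc]; positivity
  have hcΔ : c ≤ ΔQ := by rw [hc]; exact min_le_left _ _
  have hchalf : c ≤ (b - a) / 2 := by rw [hc]; exact min_le_right _ _
  have hcs : c ≤ b - a - c := by linarith
  set K := ((b - a) + ΔQ / 2) * ΔQ with hK
  have hKpos : 0 < K := by rw [hK]; positivity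
  have hσ₀pos : 0 < σ₀ := by
    rw [hσ₀]; apply Real.sqrt_pos.2; positivity
  have hσ₀sq : σ₀^2 = K / ε := by
    rw [hσ₀, Real.sq_sqrt]; positivity
  -- integrands are continuous
  have hcontN : ∀ σ : ℝ, Continuous (fun x : ℝ => Real.exp (-(x - a - c)^2 / (2 * σ^2))) := by
    intro σ; fun_prop
  have hcontD : ∀ σ : ℝ, Continuous (fun x : ℝ => Real.exp (-(x - a)^2 / (2 * σ^2))) := by
    intro σ; fun_prop
  -- rewrite integrals in terms of gg
  have hNint : ∀ σ : ℝ, (∫ x in a..b, Real.exp (-(x - a - c)^2 / (2 * σ^2)))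
      = ∫ x in (-c)..(b - a - c), gg σ x := by
    intro σ
    have h2 := intervalIntegral.integral_comp_sub_right (a := a) (b := b) (f := gg σ) (a + c)
    rw [show a - (a + c) = -c by ring, show b - (a + c) = b - a - c by ring] at h2
    rw [← h2]
    apply intervalIntegral.integral_congr
    intro x _
    simp only [gg]
    congr 1
    ring
  have hDint : ∀ σ : ℝ, (∫ x in a..b, Real.exp (-(x - a)^2 / (2 * σ^2)))
      = ∫ x in (0:ℝ)..(b - a), gg σ x := by
    intro σ
    have h2 := intervalIntegral.integral_comp_sub_right (a := a) (b := b) (f := gg σ) a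
    rw [show a - a = (0:ℝ) by ring] at h2
    rw [← h2]
    apply intervalIntegral.integral_congr
    intro x _
    simp only [gg]
  have hDpos : ∀ σ : ℝ, 0 < ∫ x in a..b, Real.exp (-(x - a)^2 / (2 * σ^2)) := by
    intro σ
    apply intervalIntegral.intervalIntegral_pos_of_pos ((hcontD σ).intervalIntegrable a b)
      (fun x => Real.exp_pos _) hab
  have hNpos : ∀ σ : ℝ, 0 < ∫ x in a..b, Real.exp (-(x - a - c)^2 / (2 * σ^2)) := by
    intro σ
    apply intervalIntegral.intervalIntegral_pos_of_pos ((hcontN σ).intervalIntegrable a b)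
      (fun x => Real.exp_pos _) hab
  have hΔCpos : ∀ σ : ℝ, 0 < ΔC σ := by
    intro σ; rw [hΔC σ]; exact div_pos (hNpos σ) (hDpos σ)
  -- log bound
  have hlog : ∀ σ : ℝ, σ₀ ≤ σ → Real.log (ΔC σ) < ε := by
    intro σ hσ
    have hσpos : 0 < σ := lt_of_lt_of_le hσ₀pos hσ
    have h2σ : (0:ℝ) < 2 * σ^2 := by positivity
    have hσ2 : K / ε ≤ σ^2 := by
      rw [← hσ₀sq]; exact pow_le_pow_left₀ hσ₀pos.le hσ 2
    have hq : (∫ x in a..b, Real.exp (-(x - a - c)^2 / (2 * σ^2)))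
        ≤ Real.exp (c * (2 * (b - a) - c) / (2 * σ^2)) *
          ∫ x in a..b, Real.exp (-(x - a)^2 / (2 * σ^2)) := by
      rw [← intervalIntegral.integral_const_mul]
      apply intervalIntegral.integral_mono_on hab.le ((hcontN σ).intervalIntegrable a b)
        ((continuous_const.mul (hcontD σ)).intervalIntegrable a b)
      intro x hx
      simp only [Pi.mul_apply]
      rw [← Real.exp_add, ← add_div]
      apply Real.exp_le_exp.2
      apply (div_le_div_iff_of_pos_right h2σ).2
      nlinarith [mul_nonneg hcpos.le (sub_nonneg.2 hx.2)]
    have hΔCle : ΔC σ ≤ Real.exp (c * (2 * (b - a) - c) / (2 * σ^2)) := by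
      rw [hΔC σ]
      exact (div_le_iff₀ (hDpos σ)).2 hq
    have hlog1 : Real.log (ΔC σ) ≤ c * (2 * (b - a) - c) / (2 * σ^2) :=
      (Real.log_le_iff_le_exp (hΔCpos σ)).2 hΔCle
    have hlt : c * (2 * (b - a) - c) / (2 * σ^2) < ε := by
      rw [div_lt_iff₀ h2σ]
      have hKε : ε * (K / ε) = K := by field_simp
      have h2K : 2 * K ≤ ε * (2 * σ^2) := by nlinarith [mul_le_mul_of_nonneg_left hσ2 hε.le]
      nlinarith [mul_le_mul hcΔ (by linarith : 2 * (b - a) - c ≤ 2 * (b - a)) (by linarith) hΔ.le]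
    linarith
  intro σ₁ σ₂ hσ₁ hlt
  have h1pos : 0 < σ₁ := lt_of_lt_of_le hσ₀pos hσ₁
  have hmono : ΔC σ₂ ≤ ΔC σ₁ := by
    rw [hΔC σ₁, hΔC σ₂, div_le_div_iff₀ (hDpos σ₂) (hDpos σ₁)]
    rw [hNint σ₁, hNint σ₂, hDint σ₁, hDint σ₂]
    have h := key_ratio (σ₁ := σ₁) (σ₂ := σ₂) (c := c) (s := b - a - c) h1pos hlt.le hcpos hcs
    rw [show b - a - c + c = b - a by ring] at h
    exact h
  have hLle : Real.log (ΔC σ₂) ≤ Real.log (ΔC σ₁) :=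
    Real.log_le_log (hΔCpos σ₂) hmono
  have hL1 : Real.log (ΔC σ₁) < ε := hlog σ₁ hσ₁
  rw [hf, hf]
  have hP1 : 0 < ε - Real.log (ΔC σ₁) := by linarith
  have hdiv : K / (ε - Real.log (ΔC σ₂)) ≤ K / (ε - Real.log (ΔC σ₁)) :=
    div_le_div_of_nonneg_left hKpos.le hP1 (by linarith)
  have hsq : σ₁^2 < σ₂^2 := by nlinarith
  linarith
end

section
/- Let a < b, ΔQ > 0, ε > 0, c = min(ΔQ,(b−a)/2), and σ > 0 satisfy σ² ≥ ((b−a)+ΔQ/2)·ΔQ/(ε − ln ΔC(σ)) where ΔC(σ) = (∫_a^b exp(−(x−a−c)²/(2σ²)) dx)/(∫_a^b exp(−(x−a)²/(2σ²)) dx) and ε − ln ΔC(σ) > 0. Then for all s, s' ∈ [a,b] with |s − s'| ≤ ΔQ and all z ∈ [a,b], the truncated-Gaussian densities p_s and p_{s'} on [a,b] (with p_s(z) proportional to exp(−(z−s)²/(2σ²)) normalized over [a,b]) satisfy p_s(z) ≤ exp(ε)·p_{s'}(z). -/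
open Real MeasureTheory intervalIntegral

noncomputable def GBG (σ a b s : ℝ) : ℝ := ∫ x in a..b, Real.exp (-(x - s)^2 / (2 * σ^2))

noncomputable def NBG (σ a b s : ℝ) : ℝ :=
  Real.exp (-(a - s)^2 / (2*σ^2)) - Real.exp (-(b - s)^2 / (2*σ^2))

lemma contBG (k : ℝ) : Continuous fun x : ℝ => Real.exp (-x^2 / k) := by fun_prop

lemma contBG' (s k : ℝ) : Continuous fun x : ℝ => Real.exp (-(x - s)^2 / k) := by fun_prop

lemma GBG_pos {a b : ℝ} (hab : a < b) (σ s : ℝ) : 0 < GBG σ a b s :=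
  intervalIntegral_pos_of_pos ((contBG' s (2*σ^2)).intervalIntegrable a b)
    (fun _ => Real.exp_pos _) hab

lemma GBG_hasDeriv (σ a b s : ℝ) : HasDerivAt (GBG σ a b) (NBG σ a b s) s := by
  set f : ℝ → ℝ := fun u => Real.exp (-u^2 / (2*σ^2)) with hf
  have hfc : Continuous f := contBG _
  set Φ : ℝ → ℝ := fun t => ∫ u in (0:ℝ)..t, f u with hΦdef
  have hΦ : ∀ t, HasDerivAt Φ (f t) t := fun t =>
    integral_hasDerivAt_right (hfc.intervalIntegrable 0 t)
      (hfc.stronglyMeasurableAtFilter _ _) hfc.continuousAt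
  have hGeq : GBG σ a b = fun s => Φ (b - s) - Φ (a - s) := by
    funext s
    have h1 : GBG σ a b s = ∫ x in (a-s)..(b-s), f x := by
      rw [GBG, ← intervalIntegral.integral_comp_sub_right f s]
    rw [h1, ← intervalIntegral.integral_interval_sub_left
      (hfc.intervalIntegrable 0 (b-s)) (hfc.intervalIntegrable 0 (a-s))]
  rw [hGeq]
  have hb' : HasDerivAt (fun s : ℝ => Φ (b - s)) (f (b - s) * (-1)) s :=
    (hΦ (b - s)).comp s ((hasDerivAt_id s).const_sub b)
  have ha' : HasDerivAt (fun s : ℝ => Φ (a - s)) (f (a - s) * (-1)) s :=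
    (hΦ (a - s)).comp s ((hasDerivAt_id s).const_sub a)
  have := hb'.sub ha'
  convert this using 1
  case e'_9 => simp [hf, NBG]; ring
  all_goals rfl

-- pointwise TP2 inequality
lemma tp2 {σ s t x a b : ℝ} (hσ : 0 < σ) (hst : s ≤ t) (hax : a ≤ x) (hxb : x ≤ b) :
    NBG σ a b t * Real.exp (-(x - s)^2 / (2*σ^2)) ≤
    NBG σ a b s * Real.exp (-(x - t)^2 / (2*σ^2))  := by
  unfold NBG
  have hk : (0:ℝ) < 2*σ^2 := by positivity
  have key : ∀ p q r w : ℝ, p^2 + q^2 ≥ r^2 + w^2 →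
      Real.exp (-p^2 / (2*σ^2)) * Real.exp (-q^2 / (2*σ^2)) ≤
      Real.exp (-r^2 / (2*σ^2)) * Real.exp (-w^2 / (2*σ^2)) := by
    intro p q r w h
    rw [← Real.exp_add, ← Real.exp_add, Real.exp_le_exp, ← add_div, ← add_div,
      div_le_div_iff₀ hk hk]
    nlinarith
  have h1 : Real.exp (-(a - t)^2 / (2*σ^2)) * Real.exp (-(x - s)^2 / (2*σ^2)) ≤
      Real.exp (-(a - s)^2 / (2*σ^2)) * Real.exp (-(x - t)^2 / (2*σ^2)) := by
    apply key; nlinarith [mul_nonneg (sub_nonneg.2 hst) (sub_nonneg.2 hax)]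
  have h2 : Real.exp (-(b - s)^2 / (2*σ^2)) * Real.exp (-(x - t)^2 / (2*σ^2)) ≤
      Real.exp (-(b - t)^2 / (2*σ^2)) * Real.exp (-(x - s)^2 / (2*σ^2)) := by
    apply key; nlinarith [mul_nonneg (sub_nonneg.2 hst) (sub_nonneg.2 hxb)]
  nlinarith

lemma ng_mono {σ a b s t : ℝ} (hσ : 0 < σ) (hab : a < b) (hst : s ≤ t) :
    NBG σ a b t * GBG σ a b s ≤ NBG σ a b s * GBG σ a b t := by
  rw [GBG, GBG, ← intervalIntegral.integral_const_mul, ← intervalIntegral.integral_const_mul]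
  apply intervalIntegral.integral_mono_on hab.le
  · exact (continuous_const.mul (contBG' s (2*σ^2))).intervalIntegrable a b
  · exact (continuous_const.mul (contBG' t (2*σ^2))).intervalIntegrable a b
  · intro x hx
    exact tp2 hσ hst hx.1 hx.2

lemma lder_anti {σ a b s t : ℝ} (hσ : 0 < σ) (hab : a < b) (hst : s ≤ t) :
    NBG σ a b t / GBG σ a b t ≤ NBG σ a b s / GBG σ a b s := by
  rw [div_le_div_iff₀ (GBG_pos hab σ t) (GBG_pos hab σ s)]
  exact ng_mono hσ hab hst

lemma GBG_cont (σ a b : ℝ) : Continuous (GBG σ a b) :=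
  continuous_iff_continuousAt.2 fun s => (GBG_hasDeriv σ a b s).continuousAt

lemma NBG_cont (σ a b : ℝ) : Continuous (NBG σ a b) := by
  unfold NBG; fun_prop

lemma LBG_cont {σ a b : ℝ} (hab : a < b) :
    Continuous (fun s => NBG σ a b s / GBG σ a b s) :=
  (NBG_cont σ a b).div (GBG_cont σ a b) (fun s => (GBG_pos hab σ s).ne')

lemma log_hasDeriv {σ a b : ℝ} (hab : a < b) (s : ℝ) :
    HasDerivAt (fun s => Real.log (GBG σ a b s)) (NBG σ a b s / GBG σ a b s) s :=
  (GBG_hasDeriv σ a b s).log (GBG_pos hab σ s).ne'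

lemma four_point {σ a b s δ : ℝ} (hσ : 0 < σ) (hab : a < b) (has : a ≤ s) (hδ : 0 ≤ δ) :
    GBG σ a b (s + δ) * GBG σ a b a ≤ GBG σ a b (a + δ) * GBG σ a b s := by
  set L : ℝ → ℝ := fun s => NBG σ a b s / GBG σ a b s with hL
  have ftc : ∀ x y : ℝ, Real.log (GBG σ a b y) - Real.log (GBG σ a b x)
      = ∫ t in x..y, L t := by
    intro x y
    rw [intervalIntegral.integral_eq_sub_of_hasDerivAt
      (fun t _ => log_hasDeriv hab t) ((LBG_cont hab).intervalIntegrable x y)]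
  have key : Real.log (GBG σ a b (s + δ)) - Real.log (GBG σ a b s)
      ≤ Real.log (GBG σ a b (a + δ)) - Real.log (GBG σ a b a) := by
    rw [ftc, ftc]
    have hcv : (∫ t in s..(s+δ), L t) = ∫ t in a..(a+δ), L (t + (s - a)) := by
      rw [intervalIntegral.integral_comp_add_right]
      congr 1 <;> ring
    rw [hcv]
    apply intervalIntegral.integral_mono_on (by linarith)
    · exact ((LBG_cont hab).comp (by fun_prop)).intervalIntegrable a (a+δ)
    · exact (LBG_cont hab).intervalIntegrable a (a+δ)
    · intro t _
      exact lder_anti hσ hab (by linarith)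
  have h1 := GBG_pos hab σ (s+δ)
  have h2 := GBG_pos hab σ s
  have h3 := GBG_pos hab σ (a+δ)
  have h4 := GBG_pos hab σ a
  rw [← Real.log_le_log_iff (by positivity) (by positivity),
    Real.log_mul (by positivity) (by positivity), Real.log_mul (by positivity) (by positivity)]
  linarith

lemma GBG_mono {σ a b s t : ℝ} (hσ : 0 < σ) (hab : a < b) (hst : s ≤ t)
    (ht : t ≤ (a + b)/2) : GBG σ a b s ≤ GBG σ a b t := by
  have ftc : GBG σ a b t - GBG σ a b s = ∫ u in s..t, NBG σ a b u :=
    (intervalIntegral.integral_eq_sub_of_hasDerivAt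
      (fun u _ => GBG_hasDeriv σ a b u) ((NBG_cont σ a b).intervalIntegrable s t)).symm
  have hpos : 0 ≤ ∫ u in s..t, NBG σ a b u := by
    apply intervalIntegral.integral_nonneg hst
    intro u hu
    have hu2 : u ≤ (a+b)/2 := le_trans hu.2 ht
    have : Real.exp (-(b - u)^2 / (2*σ^2)) ≤ Real.exp (-(a - u)^2 / (2*σ^2)) := by
      rw [Real.exp_le_exp, div_le_div_iff₀ (by positivity) (by positivity)]
      nlinarith [mul_nonneg (mul_nonneg (sub_nonneg.2 hab.le)
        (by linarith : (0:ℝ) ≤ a + b - 2*u)) (sq_nonneg σ)]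
    simpa [NBG] using sub_nonneg.2 this
  linarith

lemma GBG_symm (σ a b s : ℝ) : GBG σ a b (a + b - s) = GBG σ a b s := by
  have key := intervalIntegral.integral_comp_sub_left (a := a) (b := b)
    (fun u => Real.exp (-(u - s)^2 / (2 * σ^2))) (a + b)
  rw [show a + b - b = a by ring, show a + b - a = b by ring] at key
  have h1 : GBG σ a b (a + b - s)
      = ∫ x in a..b, Real.exp (-((a + b - x) - s)^2 / (2 * σ^2)) := by
    unfold GBG
    apply intervalIntegral.integral_congr
    intro x _
    rw [Real.exp_eq_exp]
    ring
  rw [h1]; exact key.trans rfl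
lemma norm_ratio {σ a b ΔQ s s' : ℝ} (hσ : 0 < σ) (hab : a < b) (hΔ : 0 < ΔQ)
    (hs : s ∈ Set.Icc a b) (hs' : s' ∈ Set.Icc a b) (hd : |s - s'| ≤ ΔQ) :
    GBG σ a b s' * GBG σ a b a ≤ GBG σ a b (a + min ΔQ ((b - a)/2)) * GBG σ a b s := by
  obtain ⟨hs1, hs2⟩ := hs
  obtain ⟨hs1', hs2'⟩ := hs'
  set c := min ΔQ ((b - a)/2) with hc
  have hc1 : 0 < c := lt_min hΔ (by linarith)
  have hc2 : c ≤ (b - a)/2 := min_le_right _ _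
  have hcmid : a + c ≤ (a + b)/2 := by linarith
  set u := min s (a + b - s) with hu
  set u' := min s' (a + b - s') with hu'
  have hGu : GBG σ a b u = GBG σ a b s := by
    rcases le_total s (a + b - s) with h | h
    · rw [hu, min_eq_left h]
    · rw [hu, min_eq_right h, GBG_symm]
  have hGu' : GBG σ a b u' = GBG σ a b s' := by
    rcases le_total s' (a + b - s') with h | h
    · rw [hu', min_eq_left h]
    · rw [hu', min_eq_right h, GBG_symm]
  have hau : a ≤ u := le_min hs1 (by linarith)
  have hau' : a ≤ u' := le_min hs1' (by linarith)
  have humid : u ≤ (a + b)/2 := by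
    have h1 : u ≤ s := min_le_left _ _
    have h2 : u ≤ a + b - s := min_le_right _ _
    linarith
  have humid' : u' ≤ (a + b)/2 := by
    have h1 : u' ≤ s' := min_le_left _ _
    have h2 : u' ≤ a + b - s' := min_le_right _ _
    linarith
  have hdd : |u - u'| ≤ ΔQ := by
    rw [abs_le] at hd ⊢
    rcases le_total s (a + b - s) with h | h <;>
      rcases le_total s' (a + b - s') with h' | h' <;>
        rw [hu, hu'] <;>
        [rw [min_eq_left h, min_eq_left h']; rw [min_eq_left h, min_eq_right h'];
         rw [min_eq_right h, min_eq_left h']; rw [min_eq_right h, min_eq_right h']] <;>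
        constructor <;> linarith
  have hGa := GBG_pos hab σ a
  have hGac := GBG_pos hab σ (a + c)
  rw [← hGu, ← hGu']
  rcases le_total u' u with h | h
  · -- u' ≤ u : monotone twice
    have h1 : GBG σ a b u' ≤ GBG σ a b u := GBG_mono hσ hab h humid
    have h2 : GBG σ a b a ≤ GBG σ a b (a + c) := GBG_mono hσ hab (by linarith) hcmid
    exact (mul_le_mul h1 h2 hGa.le (GBG_pos hab σ u).le).trans_eq (mul_comm _ _)
  · -- u ≤ u'
    set δ := u' - u with hδdef
    have hδ0 : 0 ≤ δ := by linarith
    have hδc : δ ≤ c := by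
      rw [abs_le] at hdd
      apply le_min (by linarith)
      linarith
    have h4 : GBG σ a b (u + δ) * GBG σ a b a ≤ GBG σ a b (a + δ) * GBG σ a b u :=
      four_point hσ hab hau hδ0
    have h5 : GBG σ a b (a + δ) ≤ GBG σ a b (a + c) := GBG_mono hσ hab (by linarith) hcmid
    have huδ : u + δ = u' := by ring
    rw [huδ] at h4
    calc GBG σ a b u' * GBG σ a b a ≤ GBG σ a b (a + δ) * GBG σ a b u := h4
      _ ≤ GBG σ a b (a + c) * GBG σ a b u :=
          mul_le_mul_of_nonneg_right h5 (GBG_pos hab σ u).le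
theorem bounded_gaussian_dp (a b ΔQ ε σ : ℝ) (hab : a < b)
    (hΔ : 0 < ΔQ) (hε : 0 < ε) (hσ : 0 < σ)
    (c : ℝ) (hc : c = min ΔQ ((b - a) / 2))
    (ΔC : ℝ) (hΔC : ΔC = (∫ x in a..b, Real.exp (-(x - a - c)^2 / (2 * σ^2))) /
        (∫ x in a..b, Real.exp (-(x - a)^2 / (2 * σ^2))))
    (hden : 0 < ε - Real.log ΔC)
    (hσ2 : σ^2 ≥ ((b - a) + ΔQ / 2) * ΔQ / (ε - Real.log ΔC))
    (p : ℝ → ℝ → ℝ)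
    (hp : ∀ s z, p s z = Real.exp (-(z - s)^2 / (2 * σ^2)) /
        ∫ x in a..b, Real.exp (-(x - s)^2 / (2 * σ^2))) :
    ∀ s ∈ Set.Icc a b, ∀ s' ∈ Set.Icc a b, |s - s'| ≤ ΔQ →
      ∀ z ∈ Set.Icc a b, p s z ≤ Real.exp ε * p s' z := by
  intro s hs s' hs' hss' z hz
  have hGk : ∀ t : ℝ, (∫ x in a..b, Real.exp (-(x - t)^2 / (2 * σ^2))) = GBG σ a b t :=
    fun t => rfl
  have hΔC' : ΔC = GBG σ a b (a + c) / GBG σ a b a := by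
    rw [hΔC, hGk]
    congr 1
    unfold GBG
    apply intervalIntegral.integral_congr
    intro x _
    rw [Real.exp_eq_exp]
    ring
  have hGs := GBG_pos hab σ s
  have hGs' := GBG_pos hab σ s'
  have hGa := GBG_pos hab σ a
  have hGac := GBG_pos hab σ (a + c)
  have hΔCpos : 0 < ΔC := by rw [hΔC']; positivity
  -- exponent bound
  have habs := abs_le.mp hss'
  have hE : (z - s')^2 - (z - s)^2 ≤ 2*(b-a)*ΔQ + ΔQ^2 := by
    have h1 : |z - s| ≤ b - a := abs_le.2 ⟨by linarith [hz.1, hs.2], by linarith [hz.2, hs.1]⟩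
    have h2 : |(s - s') * (z - s)| ≤ ΔQ * (b - a) := by
      rw [abs_mul]
      exact mul_le_mul hss' h1 (abs_nonneg _) (le_trans (abs_nonneg _) hss')
    have h3 := le_of_abs_le h2
    have h4 : (s - s')^2 ≤ ΔQ^2 := sq_le_sq' (by linarith) (by linarith)
    nlinarith
  have hBσ : ((b - a) + ΔQ/2) * ΔQ / σ^2 ≤ ε - Real.log ΔC := by
    rw [div_le_iff₀ (by positivity : (0:ℝ) < σ^2)]
    have hB := (div_le_iff₀ hden).mp hσ2
    nlinarith
  have hsum : -(z - s)^2/(2*σ^2) + Real.log ΔC ≤ ε + (-(z - s')^2/(2*σ^2)) := by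
    have e2 : ((z - s')^2 - (z - s)^2)/(2*σ^2) ≤ (2*(b-a)*ΔQ + ΔQ^2)/(2*σ^2) := by
      gcongr
    have e3 : (2*(b-a)*ΔQ + ΔQ^2)/(2*σ^2) = ((b - a) + ΔQ/2) * ΔQ / σ^2 := by
      field_simp
    have e4 : -(z - s)^2/(2*σ^2) - (-(z - s')^2/(2*σ^2))
        = ((z - s')^2 - (z - s)^2)/(2*σ^2) := by ring
    linarith
  -- main chain
  rw [hp, hp, hGk, hGk, mul_div_assoc', div_le_div_iff₀ hGs hGs']
  set Es := Real.exp (-(z - s)^2/(2*σ^2)) with hEs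
  set Es' := Real.exp (-(z - s')^2/(2*σ^2)) with hEs'
  have key1 : GBG σ a b s' * GBG σ a b a ≤ GBG σ a b (a + c) * GBG σ a b s := by
    rw [hc]; exact norm_ratio hσ hab hΔ hs hs' hss'
  have hGacEq : GBG σ a b (a + c) = ΔC * GBG σ a b a := by
    rw [hΔC']; field_simp
  have key2 : Es * GBG σ a b (a + c) ≤ Real.exp ε * Es' * GBG σ a b a := by
    have hinner : Es * ΔC ≤ Real.exp ε * Es' := by
      rw [hEs, hEs', ← Real.exp_log hΔCpos, ← Real.exp_add, ← Real.exp_add]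
      exact Real.exp_le_exp.2 hsum
    calc Es * GBG σ a b (a + c) = (Es * ΔC) * GBG σ a b a := by rw [hGacEq]; ring
      _ ≤ (Real.exp ε * Es') * GBG σ a b a := mul_le_mul_of_nonneg_right hinner hGa.le
  have main : Es * GBG σ a b s' * GBG σ a b a
      ≤ Real.exp ε * Es' * GBG σ a b s * GBG σ a b a := by
    calc Es * GBG σ a b s' * GBG σ a b a = Es * (GBG σ a b s' * GBG σ a b a) := by ring
      _ ≤ Es * (GBG σ a b (a + c) * GBG σ a b s) :=
          mul_le_mul_of_nonneg_left key1 (Real.exp_pos _).le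
      _ = (Es * GBG σ a b (a + c)) * GBG σ a b s := by ring
      _ ≤ (Real.exp ε * Es' * GBG σ a b a) * GBG σ a b s :=
          mul_le_mul_of_nonneg_right key2 hGs.le
      _ = Real.exp ε * Es' * GBG σ a b s * GBG σ a b a := by ring
  exact le_of_mul_le_mul_right main hGa
end

section
/- For 𝐚, 𝐛 ∈ ℝᵐ with aᵢ < bᵢ, σ > 0, and 𝐜 ∈ ℝᵐ with 0 < cᵢ ≤ (bᵢ−aᵢ)/2 for all i, the product ratio ΔC_m(σ) = ∏ᵢ (∫_{aᵢ}^{bᵢ} exp(−(x−aᵢ−cᵢ)²/(2σ²)) dx / ∫_{aᵢ}^{bᵢ} exp(−(x−aᵢ)²/(2σ²)) dx) satisfies ΔC_m(σ) > 1. -/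
open Real intervalIntegral

lemma factor_gt (a b c σ : ℝ) (hσ : 0 < σ) (hab : a < b) (hc0 : 0 < c)
    (hc2 : c ≤ (b - a) / 2) :
    1 < (∫ t in a..b, Real.exp (-(t - a - c)^2 / (2 * σ^2))) /
      (∫ t in a..b, Real.exp (-(t - a)^2 / (2 * σ^2))) := by
  set k := 2 * σ^2 with hk
  have hkpos : 0 < k := by positivity
  set f : ℝ → ℝ := fun x => Real.exp (-x^2 / k) with hf
  have hcont : Continuous f := by fun_prop
  have hcont2 : Continuous (fun x => f (x + (b - a - c))) :=
    hcont.comp (continuous_id.add continuous_const)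
  have hint : ∀ u v : ℝ, IntervalIntegrable f MeasureTheory.volume u v :=
    fun u v => hcont.intervalIntegrable u v
  set L := b - a with hL
  have hLc : c ≤ L - c := by simp only [hL]; linarith
  have hN : (∫ t in a..b, Real.exp (-(t - a - c)^2 / k)) = ∫ t in (-c)..(L - c), f t := by
    rw [show (-c : ℝ) = a - (a + c) by ring, show L - c = b - (a + c) by ring,
      ← intervalIntegral.integral_comp_sub_right f (a + c)]
    apply intervalIntegral.integral_congr
    intro t _; simp [hf, sub_sub]
  have hD : (∫ t in a..b, Real.exp (-(t - a)^2 / k)) = ∫ t in (0:ℝ)..L, f t := by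
    rw [show (0:ℝ) = a - a by ring, show L = b - a from rfl,
      ← intervalIntegral.integral_comp_sub_right f a]
  have h1 : ∫ x in (-c)..(0:ℝ), f x = ∫ x in (0:ℝ)..c, f x := by
    have h := intervalIntegral.integral_comp_neg (a := (0:ℝ)) (b := c) f
    simp only [neg_zero] at h
    rw [← h]
    exact intervalIntegral.integral_congr fun t _ => by simp [hf]
  have h2 : ∫ x in (L - c)..L, f x = ∫ x in (0:ℝ)..c, f (x + (L - c)) := by
    rw [intervalIntegral.integral_comp_add_right f (L - c)]
    norm_num
  have hsplitN : ∫ t in (-c)..(L - c), f t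
      = (∫ x in (-c)..(0:ℝ), f x) + ∫ x in (0:ℝ)..(L - c), f x :=
    (intervalIntegral.integral_add_adjacent_intervals (hint _ _) (hint _ _)).symm
  have hsplitD : ∫ t in (0:ℝ)..L, f t
      = (∫ x in (0:ℝ)..(L - c), f x) + ∫ x in (L - c)..L, f x :=
    (intervalIntegral.integral_add_adjacent_intervals (hint _ _) (hint _ _)).symm
  have hsub : ∫ x in (0:ℝ)..c, (f x - f (x + (L - c)))
      = (∫ x in (0:ℝ)..c, f x) - ∫ x in (0:ℝ)..c, f (x + (L - c)) :=
    intervalIntegral.integral_sub (hint _ _) (hcont2.intervalIntegrable _ _)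
  have hdiff : (∫ t in (-c)..(L - c), f t) - ∫ t in (0:ℝ)..L, f t
      = ∫ x in (0:ℝ)..c, (f x - f (x + (L - c))) := by
    rw [hsub, hsplitN, hsplitD, h1, h2]; ring
  have hpos : 0 < ∫ x in (0:ℝ)..c, (f x - f (x + (L - c))) := by
    apply intervalIntegral.intervalIntegral_pos_of_pos_on
    · exact (hcont.sub hcont2).intervalIntegrable _ _
    · intro x hx
      have hx0 : 0 < x := hx.1
      have hlt : x < x + (L - c) := by linarith
      have hsq : x ^ 2 < (x + (L - c)) ^ 2 := by nlinarith
      have hdiv : -(x + (L - c)) ^ 2 / k < -x ^ 2 / k := by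
        rw [div_lt_div_iff₀ hkpos hkpos]; nlinarith
      have := Real.exp_lt_exp.mpr hdiv
      simp only [hf]
      linarith
    · exact hc0
  have hDpos : 0 < ∫ t in (0:ℝ)..L, f t := by
    apply intervalIntegral.intervalIntegral_pos_of_pos_on (hint _ _)
    · intro x _; exact Real.exp_pos _
    · simp only [hL]; linarith
  rw [hN, hD, lt_div_iff₀ hDpos, one_mul]
  linarith

theorem multivariate_deltaC_gt_one (m : ℕ) (hm : 1 ≤ m)
    (a b c : Fin m → ℝ) (σ : ℝ) (hσ : 0 < σ)
    (hab : ∀ i, a i < b i)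
    (hc : ∀ i, 0 < c i ∧ c i ≤ (b i - a i) / 2) :
    (∏ i, (∫ t in (a i)..(b i), Real.exp (-(t - a i - c i)^2 / (2 * σ^2))) /
      (∫ t in (a i)..(b i), Real.exp (-(t - a i)^2 / (2 * σ^2)))) > 1 := by
  rw [gt_iff_lt]
  have h1 : (1:ℝ) = ∏ _i : Fin m, (1:ℝ) := by simp
  rw [h1]
  apply Finset.prod_lt_prod_of_nonempty
  · intro i _; exact one_pos
  · intro i _
    exact factor_gt (a i) (b i) (c i) σ hσ (hab i) (hc i).1 (hc i).2
  · exact Finset.univ_nonempty_iff.mpr (Fin.pos_iff_nonempty.mp hm)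
end

section
/- For σ > 0, ε > 0, a < b, 0 < ΔQ ≤ b − a, if σ² ≥ ((b−a)+ΔQ/2)·ΔQ/ε then for all x ∈ [0, b−a] and all c with |c| ≤ ΔQ, exp((2xc + c²)/(2σ²)) ≤ exp(ε). -/
open Real

theorem calibration_inequality (σ ε a b ΔQ : ℝ) (hσ : 0 < σ) (hε : 0 < ε)
    (hab : a < b) (hΔ : 0 < ΔQ) (hΔb : ΔQ ≤ b - a)
    (hσ2 : σ^2 ≥ ((b - a) + ΔQ / 2) * ΔQ / ε) :
    ∀ x, 0 ≤ x → x ≤ b - a → ∀ c, |c| ≤ ΔQ →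
      Real.exp ((2 * x * c + c^2) / (2 * σ^2)) ≤ Real.exp ε := by
  intro x hx0 hxb c hc
  apply Real.exp_le_exp.mpr
  have hσ2pos : (0:ℝ) < σ^2 := by positivity
  rw [div_le_iff₀ (by positivity)]
  have h1 : 2 * x * c ≤ 2 * (b - a) * ΔQ := by
    calc 2 * x * c ≤ 2 * x * |c| := by
          nlinarith [le_abs_self c]
      _ ≤ 2 * (b - a) * ΔQ := by nlinarith [abs_nonneg c]
  have h2 : c^2 ≤ ΔQ^2 := by nlinarith [sq_abs c, abs_nonneg c]
  have h3 : ((b - a) + ΔQ / 2) * ΔQ ≤ ε * σ^2 := by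
    rw [ge_iff_le, div_le_iff₀ hε] at hσ2
    linarith [mul_comm (σ^2) ε]
  nlinarith
end
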